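/- arXiv:1908.08502 — 3 statements merged into one kernel-verified Lean document; each statement's English description precedes it below -/
import Mathlib

section
/- Let a be a weakly increasing weak composition of length n (a_1 ≤ a_2 ≤ ⋯ ≤ a_n). Then there exists a bijection φ from KD(a) × KD(e_n) onto the union ⋃_j KD(a + e_j), taken over those 1 ≤ j ≤ n with a_j < a_{j+1} (with the convention that j = n is always included), such that wt(φ(T, U)) = wt(T) + wt(U); moreover, the sets KD(a + e_j) appearing in this union are pairwise disjoint. -/
attribute [local instance] Classical.propDecidable

/-- A diagram: a set of cells `(column, row)` with positive coordinates. -/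
abbrev Diagram : Type := Set (ℕ × ℕ)

/-- The key diagram of a weak composition `a` (parts indexed from 1). -/
def keyDiagram (a : ℕ → ℕ) : Diagram := {p | 1 ≤ p.1 ∧ 1 ≤ p.2 ∧ p.1 ≤ a p.2}

/-- A single Kohnert move: the rightmost cell of some row drops within its column to
the first unoccupied position below it. -/
def KohnertMove (T S : Diagram) : Prop :=
  ∃ c r r', (c, r) ∈ T ∧ (∀ c', (c', r) ∈ T → c' ≤ c) ∧
    1 ≤ r' ∧ r' < r ∧ (c, r') ∉ T ∧ (∀ s, r' < s → s < r → (c, s) ∈ T) ∧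
    S = insert (c, r') (T \ {(c, r)})

/-- The set of Kohnert diagrams of a weak composition. -/
def KD (a : ℕ → ℕ) : Set Diagram :=
  {T | Relation.ReflTransGen KohnertMove (keyDiagram a) T}

/-- Row weight: the number of cells in each row. -/
noncomputable def rowWeight (T : Diagram) : ℕ → ℕ :=
  fun r => {p : ℕ × ℕ | p ∈ T ∧ p.2 = r}.ncard

/-- Column weight: the number of cells in each column. -/
noncomputable def colWeight (T : Diagram) : ℕ → ℕ :=
  fun c => {p : ℕ × ℕ | p ∈ T ∧ p.1 = c}.ncard

/-- The weak composition with a single part `1` in position `j`. -/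
def eComp (j : ℕ) : ℕ → ℕ := fun i => if i = j then 1 else 0

/-- Exchange parts `i` and `j` of a weak composition. -/
def swapParts (a : ℕ → ℕ) (i j : ℕ) : ℕ → ℕ :=
  fun t => if t = i then a j else if t = j then a i else a t

/-- A single left swap: exchange two parts `a i < a j` with `i < j`. -/
def LSwapStep (a b : ℕ → ℕ) : Prop :=
  ∃ i j, 1 ≤ i ∧ i < j ∧ a i < a j ∧ b = swapParts a i j

/-- Left swap order: `b ⪯ a`. -/
def LswapLE (b a : ℕ → ℕ) : Prop := Relation.ReflTransGen LSwapStep a b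

/-- A generic Kohnert diagram: a Kohnert diagram of some weak composition. -/
def GenericKD (T : Diagram) : Prop :=
  ∃ a : ℕ → ℕ, (∃ n, ∀ i, n < i → a i = 0) ∧ T ∈ KD a

/-- The target space `D(a,k)`: union of `KD (b + e j)` over `b ⪯ a` and `1 ≤ j ≤ k`. -/
def Dset (a : ℕ → ℕ) (k : ℕ) : Set Diagram :=
  {T | ∃ b j, LswapLE b a ∧ 1 ≤ j ∧ j ≤ k ∧ T ∈ KD (b + eComp j)}

/-- `(c,r)` is an addable cell for `a`. -/
def Addable (a : ℕ → ℕ) (c r : ℕ) : Prop :=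
  1 ≤ c ∧ 1 ≤ r ∧ a r < c ∧ ∃ s, r ≤ s ∧ a s = c - 1

/-- `(c,r)` is a `k`-addable cell for `a`. -/
def KAddable (a : ℕ → ℕ) (k c r : ℕ) : Prop :=
  1 ≤ c ∧ 1 ≤ r ∧ r ≤ k ∧ a r < c ∧
    (a r < c - 1 → ∃ l, k < l ∧ a l = c - 1) ∧
    (∀ i, r < i → i ≤ k → a i < a r ∨ c ≤ a i)

/-- Apply the transpositions `t_{r0,r1} t_{r1,r2} ⋯` (rightmost first) to `a`. -/
def applyTranspositions (a : ℕ → ℕ) : List ℕ → (ℕ → ℕ)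
  | [] => a
  | [_] => a
  | r0 :: r1 :: rest => swapParts (applyTranspositions a (r1 :: rest)) r0 r1

/-- The increasing chain of row indices `r = r₀ < r₁ < ⋯ < r_q` used to construct
the maximal support composition for `a` at `(c,r)`: at each step, the next index is
the first position carrying the smallest part exceeding the current one and at most `c-1`. -/
noncomputable def suppChain (a : ℕ → ℕ) (c : ℕ) : ℕ → ℕ → List ℕ
  | 0, r => [r]
  | fuel + 1, r =>
    if (∃ s, r < s ∧ a r < a s ∧ a s ≤ c - 1) then
      r :: suppChain a c fuel (sInf {s | r < s ∧ a r < a s ∧ a s ≤ c - 1})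
    else [r]

/-- The maximal support composition for `a` at `(c,r)`. -/
noncomputable def suppComp (a : ℕ → ℕ) (c r : ℕ) : ℕ → ℕ :=
  applyTranspositions a (suppChain a c c r)

/-- The maximal drop composition for `a` in column `c` at the set of rows `R`. -/
noncomputable def dropComp (a : ℕ → ℕ) (c : ℕ) (R : Finset ℕ) : ℕ → ℕ :=
  applyTranspositions (suppComp a c (sSup (R : Set ℕ))) (R.sort (· ≤ ·))

/-- The key polynomial of a weak composition. -/
noncomputable def keyPoly (a : ℕ → ℕ) : MvPolynomial ℕ ℤ :=
  ∑ᶠ T ∈ KD a, ∏ᶠ i : ℕ, (MvPolynomial.X i : MvPolynomial ℕ ℤ) ^ rowWeight T i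

/-- A matching sequence on a diagram `T`: edges `(x, y)` mean `x` (in column `i+1`)
matches to `y` (in column `i`, weakly higher row); every cell outside column 1 is matched,
sources and targets are unique. -/
def IsMatchingSeq (T : Diagram) (M : Set ((ℕ × ℕ) × (ℕ × ℕ))) : Prop :=
  (∀ p ∈ M, p.1 ∈ T ∧ p.2 ∈ T ∧ 2 ≤ p.1.1 ∧ p.2.1 + 1 = p.1.1 ∧ p.1.2 ≤ p.2.2) ∧
  (∀ x y y' : ℕ × ℕ, (x, y) ∈ M → (x, y') ∈ M → y = y') ∧
  (∀ x x' y : ℕ × ℕ, (x, y) ∈ M → (x', y) ∈ M → x = x') ∧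
  (∀ x ∈ T, 2 ≤ x.1 → ∃ y, (x, y) ∈ M)

/-- The anchor weight of a matching sequence: its `i`-th part is the number of cells
on the path of `M` terminating at the column-1 cell in row `i`. -/
noncomputable def anchorWeight (T : Diagram) (M : Set ((ℕ × ℕ) × (ℕ × ℕ))) : ℕ → ℕ :=
  fun i =>
    {x : ℕ × ℕ | x ∈ T ∧ Relation.ReflTransGen (fun u v => (u, v) ∈ M) x (1, i)}.ncard

/-- `m_T(c,r)`. -/
noncomputable def mval (T : Diagram) (c r : ℕ) : ℤ :=
  ({p : ℕ × ℕ | p ∈ T ∧ p.1 = c - 1 ∧ r ≤ p.2}.ncard : ℤ) -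
    ({p : ℕ × ℕ | p ∈ T ∧ p.1 = c ∧ r ≤ p.2}.ncard : ℤ)

/-- One rectification step. -/
noncomputable def rho (T : Diagram) : Diagram :=
  if ∀ c r, 1 < c → 1 ≤ r → 0 ≤ mval T c r then T
  else
    let c := sInf {c | 1 < c ∧ ∃ r, 1 ≤ r ∧ mval T c r < 0}
    let r := sSup {r | 1 ≤ r ∧ ∀ r', 1 ≤ r' → mval T c r ≤ mval T c r'}
    insert (c - 1, r) (T \ {(c, r)})

/-- Rectification: iterate `rho` until it stabilizes. -/
noncomputable def rectify (T : Diagram) : Diagram :=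
  if h : ∃ m, rho^[m + 1] T = rho^[m] T then rho^[h.choose] T else T

/-- Bottom insertion `Δ₁`: add a cell at the leftmost empty position of row 1. -/
noncomputable def bottomInsert (T : Diagram) : Diagram :=
  insert (sInf {i | 1 ≤ i ∧ (i, 1) ∉ T}, 1) T

/-- Top insertion `Δ∞`: add a cell in row `j` beyond the last occupied column
and rectify. -/
noncomputable def topInsert (T : Diagram) (j : ℕ) : Diagram :=
  rectify (insert (sSup {c | ∃ r, (c, r) ∈ T} + 1, j) T)

/-- `x` is a removable cell of `T`. -/
def Removable (T : Diagram) (x : ℕ × ℕ) : Prop := x ∈ T ∧ GenericKD (T \ {x})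

/-- A weak Kohnert diagram: a diagram with a removable cell. -/
def WeakKD (T : Diagram) : Prop := ∃ x, Removable T x

/-- `c` is a removable column of `T`. -/
def IsRemovableCol (T : Diagram) (c : ℕ) : Prop := ∃ x, Removable T x ∧ x.1 = c

/-- The cells of the thread of `S` starting at the cell in column `j` and row `r`. -/
noncomputable def threadCells (S : Diagram) : ℕ → ℕ → Diagram
  | 0, _ => ∅
  | j + 1, r =>
    insert (j + 1, r)
      (if (∃ s, r ≤ s ∧ (j, s) ∈ S) then
        threadCells S j (sInf {s | r ≤ s ∧ (j, s) ∈ S})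
      else ∅)

/-- Extract the first thread of `S`: start at the lowest cell of the rightmost column. -/
noncomputable def extractThread (S : Diagram) : Diagram :=
  threadCells S (sSup {c | ∃ r, (c, r) ∈ S})
    (sInf {r | (sSup {c | ∃ r', (c, r') ∈ S}, r) ∈ S})

/-- The list of threads of the thread decomposition (with fuel). -/
noncomputable def threadList : ℕ → Diagram → List Diagram
  | 0, _ => []
  | fuel + 1, S =>
    if S = ∅ then [] else extractThread S :: threadList fuel (S \ extractThread S)

/-- The thread weight `θ(T)`: its `i`-th part is the number of cells of the thread
whose column-1 cell lies in row `i`. -/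
noncomputable def threadWeight (T : Diagram) : ℕ → ℕ :=
  fun i => ∑ᶠ th ∈ {th : Diagram | th ∈ threadList T.ncard T ∧ (1, i) ∈ th}, th.ncard

/-- The target space `D^(m)(a,k)`. -/
def DsetM (a : ℕ → ℕ) (k m : ℕ) : Set Diagram :=
  {T | ∃ (bs : ℕ → ℕ → ℕ) (js : ℕ → ℕ),
      LswapLE (bs 0) a ∧
      (∀ i, 1 ≤ i → i ≤ m → 1 ≤ js i ∧ js i ≤ k ∧
        LswapLE (bs i) (bs (i - 1) + eComp (js i))) ∧
      (∀ i i', 1 ≤ i → i < i' → i' ≤ m → bs i (js i) ≠ bs i' (js i')) ∧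
      T ∈ KD (bs m)}

/-- The sum of all monomials of degree `m` in `x_1, …, x_k`. -/
noncomputable def hPoly (k m : ℕ) : MvPolynomial ℕ ℤ :=
  ∑ s ∈ (Finset.Icc 1 k).sym m, (Multiset.map MvPolynomial.X s.val).prod

/-- Semistandard Young tableaux of shape `lam` with entries in `{1, …, n}`,
encoded as `f row col = entry` (0 outside the shape, rows/columns indexed from 1). -/
def IsSSYT (n : ℕ) (lam : ℕ → ℕ) (f : ℕ → ℕ → ℕ) : Prop :=
  (∀ i c, f i c ≠ 0 ↔ (1 ≤ i ∧ 1 ≤ c ∧ c ≤ lam i)) ∧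
  (∀ i c, f i c ≤ n) ∧
  (∀ i c, 1 ≤ i → 1 ≤ c → c + 1 ≤ lam i → f i c ≤ f i (c + 1)) ∧
  (∀ i c, 1 ≤ i → 1 ≤ c → c ≤ lam (i + 1) → f i c < f (i + 1) c)

/-- The column of row `i` at which `x` is inserted by RSK row insertion. -/
noncomputable def bumpCol (f : ℕ → ℕ → ℕ) (i x : ℕ) : ℕ :=
  sInf {c | 1 ≤ c ∧ (f i c = 0 ∨ x < f i c)}

/-- RSK row insertion, with fuel. -/
noncomputable def rskAux : ℕ → (ℕ → ℕ → ℕ) → ℕ → ℕ → (ℕ → ℕ → ℕ)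
  | 0, f, _, _ => f
  | fuel + 1, f, i, x =>
    let c := bumpCol f i x
    let y := f i c
    let f' : ℕ → ℕ → ℕ := fun i' c' => if i' = i ∧ c' = c then x else f i' c'
    if y = 0 then f' else rskAux fuel f' (i + 1) y

/-- RSK row insertion of the entry `x` into a tableau with entries at most `n`. -/
noncomputable def RSKinsert (n : ℕ) (f : ℕ → ℕ → ℕ) (x : ℕ) : ℕ → ℕ → ℕ :=
  rskAux (n + 1) f 1 x

/-- The map `𝔻`: the tableau cell in column `c` with entry `v` becomes the diagram
cell `(c, n + 1 - v)`. -/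
def toDiagram (n : ℕ) (f : ℕ → ℕ → ℕ) : Diagram :=
  {p | ∃ i, 1 ≤ i ∧ f i p.1 ≠ 0 ∧ p.2 + f i p.1 = n + 1}

/-! ### Auxiliary development for statement7 -/

namespace S7

open Finset

/-- Number of cells of `D` in column `c` with row in `[s, n]`. -/
noncomputable def cnt (n : ℕ) (D : Diagram) (c s : ℕ) : ℕ :=
  ((Finset.Icc s n).filter (fun r => (c, r) ∈ D)).card

/-- All cells within columns `≥ 1` and rows `[1, n]`. -/
def box (n : ℕ) (D : Diagram) : Prop := ∀ p ∈ D, 1 ≤ p.1 ∧ 1 ≤ p.2 ∧ p.2 ≤ n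

/-- Nesting of consecutive columns. -/
def nested (n : ℕ) (D : Diagram) : Prop :=
  ∀ c s, cnt n D (c + 2) s ≤ cnt n D (c + 1) s

/-- Column profile of a composition. -/
noncomputable def mcol (a : ℕ → ℕ) (n c : ℕ) : ℕ :=
  ((Finset.Icc 1 n).filter (fun r => c ≤ a r)).card

/-- The characterization predicate for Kohnert diagrams of weakly increasing shapes. -/
def Valid (a : ℕ → ℕ) (n : ℕ) (D : Diagram) : Prop :=
  box n D ∧ nested n D ∧ ∀ c, cnt n D (c + 1) 1 = mcol a n (c + 1)

lemma cnt_eq_sum (n : ℕ) (D : Diagram) (c s : ℕ) :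
    cnt n D c s = ∑ r ∈ Finset.Icc s n, (if (c, r) ∈ D then 1 else 0) := by
  rw [cnt, Finset.card_filter]

lemma cnt_mono (n : ℕ) (D : Diagram) (c : ℕ) {s s' : ℕ} (h : s ≤ s') :
    cnt n D c s' ≤ cnt n D c s :=
  Finset.card_le_card (Finset.filter_subset_filter _ (Finset.Icc_subset_Icc h le_rfl))

lemma cnt_le (n : ℕ) (D : Diagram) (c s : ℕ) : cnt n D c s ≤ n + 1 - s := by
  have := Finset.card_filter_le (Finset.Icc s n) (fun r => (c, r) ∈ D)
  rwa [Nat.card_Icc] at this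

lemma cnt_zero (n : ℕ) (D : Diagram) (c : ℕ) {s : ℕ} (h : n < s) : cnt n D c s = 0 := by
  rw [cnt, Finset.Icc_eq_empty (by omega), Finset.filter_empty, Finset.card_empty]

lemma cnt_split (n : ℕ) (D : Diagram) (c : ℕ) {s : ℕ} (h : s ≤ n) :
    cnt n D c s = (if (c, s) ∈ D then 1 else 0) + cnt n D c (s + 1) := by
  have hIcc : Finset.Icc s n = insert s (Finset.Icc (s + 1) n) := by
    ext x; simp only [Finset.mem_Icc, Finset.mem_insert]; omega
  rw [cnt, hIcc, Finset.filter_insert]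
  have hnm : s ∉ (Finset.Icc (s + 1) n).filter (fun r => (c, r) ∈ D) := by
    simp only [Finset.mem_filter, Finset.mem_Icc]; omega
  split_ifs with hm
  · rw [Finset.card_insert_of_notMem hnm, cnt]; omega
  · rw [cnt]; omega

lemma cnt_pos (n : ℕ) (D : Diagram) {c s t : ℕ} (hm : (c, t) ∈ D) (h1 : s ≤ t)
    (h2 : t ≤ n) : 1 ≤ cnt n D c s := by
  rw [cnt]
  exact Finset.card_pos.2 ⟨t, Finset.mem_filter.2 ⟨Finset.mem_Icc.2 ⟨h1, h2⟩, hm⟩⟩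

lemma cnt_mem_of_pos (n : ℕ) (D : Diagram) {c s : ℕ} (h : 1 ≤ cnt n D c s) :
    ∃ t, s ≤ t ∧ t ≤ n ∧ (c, t) ∈ D := by
  rw [cnt] at h
  obtain ⟨t, ht⟩ := Finset.card_pos.1 h
  rw [Finset.mem_filter, Finset.mem_Icc] at ht
  exact ⟨t, ht.1.1, ht.1.2, ht.2⟩

lemma cnt_congr (n : ℕ) {D D' : Diagram} {c c' : ℕ} (s : ℕ)
    (h : ∀ r, s ≤ r → r ≤ n → ((c, r) ∈ D ↔ (c', r) ∈ D')) :
    cnt n D c s = cnt n D' c' s := by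
  unfold cnt
  rw [Finset.filter_congr_decidable, Finset.filter_congr_decidable]
  congr 1
  ext x
  simp only [Finset.mem_filter, Finset.mem_Icc]
  exact ⟨fun ⟨hx, hm⟩ => ⟨hx, (h x hx.1 hx.2).1 hm⟩,
    fun ⟨hx, hm⟩ => ⟨hx, (h x hx.1 hx.2).2 hm⟩⟩

lemma cnt_insert (n : ℕ) (D : Diagram) {p : ℕ × ℕ} (hp : p ∉ D) (e s : ℕ) :
    cnt n (insert p D) e s
      = cnt n D e s + (if p.1 = e ∧ s ≤ p.2 ∧ p.2 ≤ n then 1 else 0) := by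
  obtain ⟨pc, pr⟩ := p
  by_cases hc : pc = e ∧ s ≤ pr ∧ pr ≤ n
  · obtain ⟨hc1, hc2, hc3⟩ := hc
    subst hc1
    have hset : (Finset.Icc s n).filter (fun r => (pc, r) ∈ insert (pc, pr) D)
        = insert pr ((Finset.Icc s n).filter (fun r => (pc, r) ∈ D)) := by
      ext x
      simp only [Finset.mem_filter, Finset.mem_insert, Finset.mem_Icc,
        Set.mem_insert_iff, Prod.mk.injEq, true_and]
      constructor
      · rintro ⟨hx, (hxx | hxD)⟩
        · exact Or.inl hxx
        · exact Or.inr ⟨hx, hxD⟩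
      · rintro (rfl | ⟨hx, hxD⟩)
        · exact ⟨⟨hc2, hc3⟩, Or.inl rfl⟩
        · exact ⟨hx, Or.inr hxD⟩
    have hnotm : pr ∉ (Finset.Icc s n).filter (fun r => (pc, r) ∈ D) := by
      simp only [Finset.mem_filter, Finset.mem_Icc]
      rintro ⟨-, h⟩; exact hp h
    rw [cnt, Finset.filter_congr_decidable, hset, Finset.card_insert_of_notMem hnotm, cnt,
      Finset.filter_congr_decidable, if_pos ⟨rfl, hc2, hc3⟩]
  · have h2 : cnt n (insert (pc, pr) D) e s = cnt n D e s := by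
      refine cnt_congr n s fun r hr1 hr2 => ?_
      simp only [Set.mem_insert_iff, Prod.mk.injEq]
      constructor
      · rintro (⟨rfl, rfl⟩ | h)
        · exact absurd ⟨rfl, hr1, hr2⟩ hc
        · exact h
      · intro h; exact Or.inr h
    rw [h2, if_neg (fun h => hc ⟨h.1, h.2⟩), add_zero]

lemma insert_diff_self_mem {D : Diagram} {q : ℕ × ℕ} (hq : q ∈ D) :
    insert q (D \ {q}) = D := by
  rw [Set.insert_diff_singleton, Set.insert_eq_self.2 hq]

lemma cnt_del (n : ℕ) (D : Diagram) {q : ℕ × ℕ} (hq : q ∈ D) (e s : ℕ) :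
    cnt n D e s
      = cnt n (D \ {q}) e s + (if q.1 = e ∧ s ≤ q.2 ∧ q.2 ≤ n then 1 else 0) := by
  conv_lhs => rw [← insert_diff_self_mem hq]
  exact cnt_insert n _ (by simp) e s

lemma cnt_swap (n : ℕ) (D : Diagram) {p q : ℕ × ℕ} (hq : q ∈ D) (hp : p ∉ D ∨ p = q)
    (e s : ℕ) :
    cnt n (insert p (D \ {q})) e s + (if q.1 = e ∧ s ≤ q.2 ∧ q.2 ≤ n then 1 else 0)
      = cnt n D e s + (if p.1 = e ∧ s ≤ p.2 ∧ p.2 ≤ n then 1 else 0) := by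
  rcases hp with hp | rfl
  · rw [cnt_insert n _ (by simp [hp]) e s, cnt_del n D hq e s]; ring
  · rw [insert_diff_self_mem hq]

lemma unswap {D : Diagram} {p q : ℕ × ℕ} (hq : q ∈ D) (hp : p ∉ D ∨ p = q) :
    insert q ((insert p (D \ {q})) \ {p}) = D := by
  rcases hp with hp | rfl
  · have h1 : (insert p (D \ {q})) \ {p} = D \ {q} := by
      rw [Set.insert_diff_self_of_notMem]
      simp only [Set.mem_diff, Set.mem_singleton_iff, not_and]
      intro h; exact absurd h hp
    rw [h1, insert_diff_self_mem hq]
  · rw [insert_diff_self_mem hq, insert_diff_self_mem hq]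

lemma cnt_interval (n : ℕ) (D : Diagram) (c : ℕ) : ∀ (u s : ℕ), s ≤ u + 1 → u ≤ n →
    cnt n D c s = (∑ r ∈ Finset.Icc s u, if (c, r) ∈ D then 1 else 0) + cnt n D c (u + 1) := by
  intro u
  induction u with
  | zero =>
    intro s hs hn
    interval_cases s
    · rw [cnt_split n D c hn, Finset.Icc_self, Finset.sum_singleton]
    · simp
  | succ u ih =>
    intro s hs hn
    by_cases h : s = u + 2
    · subst h; simp [Finset.Icc_eq_empty_of_lt]
    · have hs' : s ≤ u + 1 := by omega
      rw [ih s hs' (by omega), Finset.sum_Icc_succ_top hs',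
        cnt_split n D c (show u + 1 ≤ n by omega)]
      ring

lemma cnt_gap (n : ℕ) (D : Diagram) (c : ℕ) {u s : ℕ} (hs : s ≤ u + 1)
    (hgap : ∀ t, s ≤ t → t ≤ u → (c, t) ∉ D) : cnt n D c s = cnt n D c (u + 1) := by
  by_cases hn : u ≤ n
  · rw [cnt_interval n D c u s hs hn, Finset.sum_eq_zero, zero_add]
    intro r hr
    rw [Finset.mem_Icc] at hr
    rw [if_neg (hgap r hr.1 hr.2)]
  · have h1 := cnt_mono n D c hs
    have h2 : cnt n D c s ≤ cnt n D c (u + 1) := by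
      by_cases hsn : n < s
      · rw [cnt_zero n D c hsn]; omega
      · rw [cnt_interval n D c n s (by omega) le_rfl, Finset.sum_eq_zero, zero_add,
          cnt_zero n D c (show n < n + 1 by omega), cnt_zero n D c (show n < u + 1 by omega)]
        intro r hr
        rw [Finset.mem_Icc] at hr
        exact if_neg (hgap r hr.1 (by omega))
    omega

lemma cnt_full (n : ℕ) (D : Diagram) (c : ℕ) {u s : ℕ} (hs : s ≤ u + 1) (hu : u ≤ n)
    (hfull : ∀ t, s ≤ t → t ≤ u → (c, t) ∈ D) :
    cnt n D c s = cnt n D c (u + 1) + (u + 1 - s) := by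
  rw [cnt_interval n D c u s hs hu, Finset.sum_congr rfl
    (fun r hr => if_pos (hfull r (Finset.mem_Icc.1 hr).1 (Finset.mem_Icc.1 hr).2))]
  simp [Nat.card_Icc]; ring

lemma cnt_bound_notmem (n : ℕ) (D : Diagram) (c : ℕ) {u s : ℕ} (hs : s ≤ u) (hu : u ≤ n)
    (hnot : (c, u) ∉ D) : cnt n D c s ≤ cnt n D c (u + 1) + (u - s) := by
  rw [cnt_interval n D c u s (by omega) hu]
  have h1 : (∑ r ∈ Finset.Icc s u, if (c, r) ∈ D then (1:ℕ) else 0) ≤ u - s := by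
    have hmem : u ∈ Finset.Icc s u := Finset.mem_Icc.2 ⟨hs, le_rfl⟩
    rw [← Finset.sum_erase_add _ _ hmem, if_neg hnot, add_zero]
    calc (∑ r ∈ (Finset.Icc s u).erase u, if (c, r) ∈ D then (1:ℕ) else 0)
        ≤ ∑ r ∈ (Finset.Icc s u).erase u, 1 :=
          Finset.sum_le_sum (fun r _ => by split_ifs <;> omega)
      _ = ((Finset.Icc s u).erase u).card := by simp
      _ = u - s := by rw [Finset.card_erase_of_mem hmem, Nat.card_Icc]; omega
  omega

lemma nested_le (n : ℕ) {D : Diagram} (hD : nested n D) {c c' : ℕ} (h1 : 1 ≤ c)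
    (h2 : c ≤ c') (s : ℕ) : cnt n D c' s ≤ cnt n D c s := by
  induction c' with
  | zero => omega
  | succ c' ih =>
    by_cases h : c = c' + 1
    · subst h; exact le_rfl
    · have h3 : c ≤ c' := by omega
      have h4 : 1 ≤ c' := by omega
      calc cnt n D (c' + 1) s ≤ cnt n D c' s := by
            obtain ⟨k, rfl⟩ : ∃ k, c' = k + 1 := ⟨c' - 1, by omega⟩
            exact hD k s
        _ ≤ cnt n D c s := ih h3

lemma mcol_anti (a : ℕ → ℕ) (n : ℕ) {c c' : ℕ} (h : c ≤ c') : mcol a n c' ≤ mcol a n c := by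
  apply Finset.card_le_card
  intro x hx
  rw [Finset.mem_filter] at *
  exact ⟨hx.1, le_trans h hx.2⟩

lemma mcol_le (a : ℕ → ℕ) (n c : ℕ) : mcol a n c ≤ n := by
  unfold mcol
  calc ((Finset.Icc 1 n).filter (fun r => c ≤ a r)).card
      ≤ (Finset.Icc 1 n).card := Finset.card_le_card (Finset.filter_subset _ _)
    _ = n := by rw [Nat.card_Icc]; omega

lemma cnt_key (a : ℕ → ℕ) (n : ℕ) {c : ℕ} (hc : 1 ≤ c) :
    cnt n (keyDiagram a) c 1 = mcol a n c := by
  unfold cnt mcol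
  rw [Finset.filter_congr_decidable, Finset.filter_congr_decidable]
  congr 1
  apply Finset.filter_congr
  intro r hr
  rw [Finset.mem_Icc] at hr
  simp only [keyDiagram, Set.mem_setOf_eq]
  exact ⟨fun h => h.2.2, fun h => ⟨hc, hr.1, h⟩⟩

lemma key_valid (a : ℕ → ℕ) (n : ℕ) (ha : ∀ i, n < i → a i = 0) :
    Valid a n (keyDiagram a) := by
  refine ⟨?_, ?_, ?_⟩
  · rintro ⟨pc, pr⟩ hp
    obtain ⟨h1, h2, h3⟩ := hp
    refine ⟨h1, h2, ?_⟩
    by_contra hcon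
    have := ha pr (by omega)
    simp only at h3
    omega
  · intro c s
    apply Finset.card_le_card
    intro x hx
    rw [Finset.mem_filter] at hx ⊢
    obtain ⟨hxi, hxk⟩ := hx
    simp only [keyDiagram, Set.mem_setOf_eq] at hxk ⊢
    exact ⟨hxi, by omega, hxk.2.1, by omega⟩
  · intro c
    exact cnt_key a n (by omega)

lemma valid_move {n : ℕ} {a : ℕ → ℕ} {T S : Diagram} (hT : Valid a n T)
    (hM : KohnertMove T S) : Valid a n S := by
  obtain ⟨hbox, hnest, hprof⟩ := hT
  obtain ⟨c, r, r', hmem, hright, hr1, hrr, hnotm, hbet, rfl⟩ := hM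
  have hrn : r ≤ n := (hbox _ hmem).2.2
  have hc1 : 1 ≤ c := (hbox _ hmem).1
  have hr'n : r' ≤ n := by omega
  set S := insert (c, r') (T \ {(c, r)}) with hS
  have key : ∀ e s, cnt n S e s + (if c = e ∧ s ≤ r ∧ r ≤ n then 1 else 0)
      = cnt n T e s + (if c = e ∧ s ≤ r' ∧ r' ≤ n then 1 else 0) := by
    intro e s
    have h := cnt_swap n T (p := (c, r')) (q := (c, r)) hmem (Or.inl hnotm) e s
    simpa using h
  have keyA : ∀ e s, e ≠ c → cnt n S e s = cnt n T e s := by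
    intro e s he
    have h := key e s
    rw [if_neg (fun hh => he hh.1.symm), if_neg (fun hh => he hh.1.symm)] at h
    omega
  have keyB : ∀ s, s ≤ r' → cnt n S c s = cnt n T c s := by
    intro s hs
    have h := key c s
    rw [if_pos ⟨rfl, by omega, hrn⟩, if_pos ⟨rfl, hs, hr'n⟩] at h
    omega
  have keyC : ∀ s, r < s → cnt n S c s = cnt n T c s := by
    intro s hs
    have h := key c s
    rw [if_neg (by omega : ¬(c = c ∧ s ≤ r ∧ r ≤ n)),
      if_neg (by omega : ¬(c = c ∧ s ≤ r' ∧ r' ≤ n))] at h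
    omega
  have keyD : ∀ s, r' < s → s ≤ r → cnt n S c s + 1 = cnt n T c s := by
    intro s hs1 hs2
    have h := key c s
    rw [if_pos ⟨rfl, hs2, hrn⟩, if_neg (by omega : ¬(c = c ∧ s ≤ r' ∧ r' ≤ n))] at h
    omega
  have hstrict : ∀ s, r' < s → s ≤ r → cnt n T (c + 1) s + 1 ≤ cnt n T c s := by
    intro s hs1 hs2
    have hfull : cnt n T c s = cnt n T c (r + 1) + (r + 1 - s) := by
      apply cnt_full n T c (by omega) hrn
      intro t ht1 ht2
      rcases eq_or_lt_of_le ht2 with rfl | hlt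
      · exact hmem
      · exact hbet t (by omega) hlt
    have hbnd : cnt n T (c + 1) s ≤ cnt n T (c + 1) (r + 1) + (r - s) := by
      apply cnt_bound_notmem n T (c + 1) hs2 hrn
      intro hcon
      have := hright (c + 1) hcon
      omega
    have hnn : cnt n T (c + 1) (r + 1) ≤ cnt n T c (r + 1) := by
      obtain ⟨k, rfl⟩ : ∃ k, c = k + 1 := ⟨c - 1, by omega⟩
      exact hnest k (r + 1)
    omega
  refine ⟨?_, ?_, ?_⟩
  · rintro p hp
    rcases hp with rfl | hp
    · exact ⟨hc1, hr1, by omega⟩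
    · exact hbox p hp.1
  · intro e s
    by_cases h2 : e + 2 = c
    · -- left column is the moved one
      have h1 : e + 1 ≠ c := by omega
      rw [keyA (e + 1) s (by omega)]
      rcases le_or_gt s r' with hs | hs
      · rw [← h2] at keyB keyC keyD
        rw [keyB s hs]; exact hnest e s
      · rcases le_or_gt s r with hs2 | hs2
        · have := keyD s (by omega) hs2
          rw [← h2] at this
          have := hnest e s
          omega
        · rw [← h2] at keyC
          rw [keyC s hs2]; exact hnest e s
    · by_cases h3 : e + 1 = c
      · -- right column is the moved one
        rw [keyA (e + 2) s (by omega)]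
        rcases le_or_gt s r' with hs | hs
        · rw [← h3] at keyB
          rw [keyB s hs]; exact hnest e s
        · rcases le_or_gt s r with hs2 | hs2
          · have h4 := keyD s (by omega) hs2
            have h5 := hstrict s (by omega) hs2
            rw [← h3] at h4 h5
            rw [show e + 1 + 1 = e + 2 from rfl] at h5
            omega
          · rw [← h3] at keyC
            rw [keyC s hs2]; exact hnest e s
      · rw [keyA (e + 2) s (by omega), keyA (e + 1) s (by omega)]
        exact hnest e s
  · intro c0
    have h := key (c0 + 1) 1
    by_cases hc : c = c0 + 1
    · rw [if_pos ⟨hc, by omega, hrn⟩, if_pos ⟨hc, by omega, hr'n⟩] at h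
      have : cnt n S (c0 + 1) 1 = cnt n T (c0 + 1) 1 := by omega
      rw [this]; exact hprof c0
    · rw [if_neg (fun hh => hc hh.1), if_neg (fun hh => hc hh.1)] at h
      have : cnt n S (c0 + 1) 1 = cnt n T (c0 + 1) 1 := by omega
      rw [this]; exact hprof c0

lemma KD_subset_valid {n : ℕ} {a : ℕ → ℕ} (ha : ∀ i, n < i → a i = 0) {T : Diagram}
    (hT : T ∈ KD a) : Valid a n T := by
  unfold KD at hT
  induction hT with
  | refl => exact key_valid a n ha
  | tail _ hstep ih => exact valid_move ih hstep

lemma mcol_mem {a : ℕ → ℕ} {n : ℕ} (hinc : ∀ i j, 1 ≤ i → i ≤ j → j ≤ n → a i ≤ a j)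
    {c r : ℕ} (h1 : 1 ≤ r) (h2 : r ≤ n) :
    c ≤ a r ↔ n - mcol a n c < r := by
  constructor
  · intro h
    have hsub : Finset.Icc r n ⊆ (Finset.Icc 1 n).filter (fun t => c ≤ a t) := by
      intro t ht
      rw [Finset.mem_Icc] at ht
      rw [Finset.mem_filter, Finset.mem_Icc]
      exact ⟨⟨by omega, ht.2⟩, le_trans h (hinc r t h1 ht.1 ht.2)⟩
    have hc := Finset.card_le_card hsub
    rw [Nat.card_Icc] at hc
    unfold mcol
    omega
  · intro h
    by_contra hcon
    have hsub : (Finset.Icc 1 n).filter (fun t => c ≤ a t) ⊆ Finset.Icc (r + 1) n := by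
      intro t ht
      rw [Finset.mem_filter, Finset.mem_Icc] at ht
      rw [Finset.mem_Icc]
      rcases le_or_gt t r with h5 | h5
      · exact absurd (le_trans ht.2 (hinc t r ht.1.1 h5 h2)) hcon
      · exact ⟨by omega, ht.1.2⟩
    have hc := Finset.card_le_card hsub
    rw [Nat.card_Icc] at hc
    unfold mcol at h
    omega

lemma climb {D : Diagram} {n v : ℕ}
    (hnc : ∀ c t, v < t → t < n → (c, t) ∈ D → (c, t + 1) ∈ D)
    {c t : ℕ} (hm : (c, t) ∈ D) (hv : v < t) :
    ∀ u, t ≤ u → u ≤ n → (c, u) ∈ D := by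
  have key : ∀ k, t + k ≤ n → (c, t + k) ∈ D := by
    intro k
    induction k with
    | zero => intro _; simpa using hm
    | succ k ih =>
      intro hk
      exact hnc c (t + k) (by omega) (by omega) (ih (by omega))
  intro u h1 h2
  obtain ⟨k, rfl⟩ := Nat.le.dest h1
  exact key k h2

lemma cnt_of_climb {D : Diagram} {n v : ℕ} (hbox : box n D)
    (hnc : ∀ c t, v < t → t < n → (c, t) ∈ D → (c, t + 1) ∈ D)
    {c t : ℕ} (hm : (c, t) ∈ D) (hv : v < t) : cnt n D c t = n + 1 - t := by
  have htn : t ≤ n := (hbox _ hm).2.2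
  have h1 : cnt n D c t = cnt n D c (n + 1) + (n + 1 - t) :=
    cnt_full n D c (by omega) le_rfl (fun u hu1 hu2 => climb hnc hm hv u hu1 hu2)
  rw [cnt_zero n D c (by omega : n < n + 1)] at h1
  omega

/-- Maximal part of `a` on `[1, n]`. -/
noncomputable def Amax (a : ℕ → ℕ) (n : ℕ) : ℕ := (Finset.Icc 1 n).sup a

lemma valid_colbound {a : ℕ → ℕ} {n : ℕ} {D : Diagram} (hV : Valid a n D)
    {p : ℕ × ℕ} (hp : p ∈ D) : p.1 ≤ Amax a n := by
  obtain ⟨hbox, hnest, hprof⟩ := hV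
  obtain ⟨h1, h2, h3⟩ := hbox p hp
  obtain ⟨k, hk⟩ : ∃ k, p.1 = k + 1 := ⟨p.1 - 1, by omega⟩
  have hpos : 1 ≤ cnt n D p.1 1 := by
    refine cnt_pos n D (t := p.2) ?_ h2 h3
    rw [show (p.1, p.2) = p from rfl]
    exact hp
  rw [hk, hprof k] at hpos
  unfold mcol at hpos
  obtain ⟨r0, hr0⟩ := Finset.card_pos.1 hpos
  rw [Finset.mem_filter, Finset.mem_Icc] at hr0
  calc p.1 = k + 1 := hk
    _ ≤ a r0 := hr0.2
    _ ≤ Amax a n := Finset.le_sup (Finset.mem_Icc.2 ⟨hr0.1.1, hr0.1.2⟩)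

/-- Sum of row indices of cells (within a bounding box). -/
noncomputable def mu (A n : ℕ) (D : Diagram) : ℕ :=
  ∑ p ∈ (Finset.Icc 1 A ×ˢ Finset.Icc 1 n).filter (fun p => p ∈ D), p.2

lemma mu_le (A n : ℕ) (D : Diagram) : mu A n D ≤ A * n * n := by
  unfold mu
  calc (∑ p ∈ (Finset.Icc 1 A ×ˢ Finset.Icc 1 n).filter (fun p => p ∈ D), p.2)
      ≤ ∑ p ∈ (Finset.Icc 1 A ×ˢ Finset.Icc 1 n).filter (fun p => p ∈ D), n := by
        refine Finset.sum_le_sum fun p hp => ?_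
        rw [Finset.mem_filter, Finset.mem_product, Finset.mem_Icc, Finset.mem_Icc] at hp
        exact hp.1.2.2
    _ = ((Finset.Icc 1 A ×ˢ Finset.Icc 1 n).filter (fun p => p ∈ D)).card * n := by
        rw [Finset.sum_const, smul_eq_mul]
    _ ≤ (A * n) * n := by
        have h1 := Finset.card_filter_le (Finset.Icc 1 A ×ˢ Finset.Icc 1 n) (fun p => p ∈ D)
        have h2 : (Finset.Icc 1 A ×ˢ Finset.Icc 1 n).card = A * n := by
          rw [Finset.card_product, Nat.card_Icc, Nat.card_Icc]
          congr 1 <;> omega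
        have := le_trans h1 (le_of_eq h2)
        exact Nat.mul_le_mul_right n this

lemma mu_swap (A n : ℕ) (X Y : Diagram) (p q : ℕ × ℕ)
    (hq : q ∈ X) (hp : p ∉ X)
    (hY : ∀ x, x ∈ Y ↔ x = p ∨ (x ∈ X ∧ x ≠ q))
    (hpB : p ∈ Finset.Icc 1 A ×ˢ Finset.Icc 1 n)
    (hqB : q ∈ Finset.Icc 1 A ×ˢ Finset.Icc 1 n) :
    mu A n Y + q.2 = mu A n X + p.2 := by
  unfold mu
  set B := Finset.Icc 1 A ×ˢ Finset.Icc 1 n with hB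
  have hpq : p ≠ q := fun h => hp (h ▸ hq)
  have hYset : B.filter (fun x => x ∈ Y) = insert p ((B.filter (fun x => x ∈ X)).erase q) := by
    ext x
    simp only [Finset.mem_filter, Finset.mem_insert, Finset.mem_erase]
    rw [hY x]
    constructor
    · rintro ⟨hxB, (rfl | ⟨hxX, hxq⟩)⟩
      · exact Or.inl rfl
      · exact Or.inr ⟨hxq, hxB, hxX⟩
    · rintro (rfl | ⟨hxq, hxB, hxX⟩)
      · exact ⟨hpB, Or.inl rfl⟩
      · exact ⟨hxB, Or.inr ⟨hxX, hxq⟩⟩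
  have hqF : q ∈ B.filter (fun x => x ∈ X) := Finset.mem_filter.2 ⟨hqB, hq⟩
  have hpF : p ∉ (B.filter (fun x => x ∈ X)).erase q := by
    intro hcon
    exact hp (Finset.mem_filter.1 (Finset.mem_of_mem_erase hcon)).2
  rw [hYset, Finset.sum_insert hpF]
  have herase : (∑ x ∈ (B.filter (fun x => x ∈ X)).erase q, x.2) + q.2
      = ∑ x ∈ B.filter (fun x => x ∈ X), x.2 :=
    Finset.sum_erase_add (B.filter (fun x => x ∈ X)) (fun x => x.2) hqF
  omega

lemma lift {n : ℕ} {a : ℕ → ℕ} (ha : ∀ i, n < i → a i = 0)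
    (hinc : ∀ i j, 1 ≤ i → i ≤ j → j ≤ n → a i ≤ a j)
    {D : Diagram} (hV : Valid a n D) (hne : D ≠ keyDiagram a) :
    ∃ D', Valid a n D' ∧ KohnertMove D' D ∧
      mu (Amax a n) n D' = mu (Amax a n) n D + 1 := by
  obtain ⟨hbox, hnest, hprof⟩ := hV
  have hprof' : ∀ c, 1 ≤ c → cnt n D c 1 = mcol a n c := by
    intro c hc
    obtain ⟨k, rfl⟩ : ∃ k, c = k + 1 := ⟨c - 1, by omega⟩
    exact hprof k
  -- candidate existence
  have hCne : {v : ℕ | v < n ∧ ∃ c, (c, v) ∈ D ∧ (c, v + 1) ∉ D}.Nonempty := by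
    by_contra hC
    rw [Set.not_nonempty_iff_eq_empty] at hC
    have hnc : ∀ c t, 0 < t → t < n → (c, t) ∈ D → (c, t + 1) ∈ D := by
      intro c t _ htn hm
      by_contra hcon
      have : t ∈ {v : ℕ | v < n ∧ ∃ c, (c, v) ∈ D ∧ (c, v + 1) ∉ D} := ⟨htn, c, hm, hcon⟩
      rw [hC] at this
      exact this
    apply hne
    ext ⟨c, r⟩
    have hmemiff : (c, r) ∈ D ↔ (1 ≤ c ∧ 1 ≤ r ∧ r ≤ n ∧ n - mcol a n c < r) := by
      constructor
      · intro hm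
        obtain ⟨h1, h2, h3⟩ := hbox _ hm
        refine ⟨h1, h2, h3, ?_⟩
        have h4 : cnt n D c r = n + 1 - r := cnt_of_climb hbox hnc hm (by omega)
        have h5 : cnt n D c r ≤ cnt n D c 1 := cnt_mono n D c (by omega)
        rw [hprof' c h1] at h5
        omega
      · rintro ⟨h1, h2, h3, h4⟩
        by_contra hno
        have hgap : ∀ t, 1 ≤ t → t ≤ r → (c, t) ∉ D := by
          intro t ht1 ht2 hmem
          exact hno (climb hnc hmem (by omega) r ht2 h3)
        have h5 : cnt n D c 1 = cnt n D c (r + 1) := cnt_gap n D c (by omega) hgap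
        have h6 := cnt_le n D c (r + 1)
        rw [hprof' c h1] at h5
        omega
    rw [hmemiff]
    simp only [keyDiagram, Set.mem_setOf_eq]
    constructor
    · rintro ⟨h1, h2, h3, h4⟩
      exact ⟨h1, h2, (mcol_mem hinc h2 h3).2 h4⟩
    · rintro ⟨h1, h2, h3⟩
      have h4 : r ≤ n := by
        by_contra hcon
        have := ha r (by omega)
        omega
      exact ⟨h1, h2, h4, (mcol_mem hinc h2 h4).1 h3⟩
  -- choose vmax, c0
  set C := {v : ℕ | v < n ∧ ∃ c, (c, v) ∈ D ∧ (c, v + 1) ∉ D} with hCdef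
  have hCbdd : BddAbove C := ⟨n, fun v hv => le_of_lt hv.1⟩
  set v := sSup C with hvdef
  have hvC : v ∈ C := Nat.sSup_mem hCne hCbdd
  obtain ⟨hvn, cw, hcw⟩ := hvC
  have hCmax : ∀ t ∈ C, t ≤ v := fun t ht => le_csSup hCbdd ht
  have hCcne : {c : ℕ | (c, v) ∈ D ∧ (c, v + 1) ∉ D}.Nonempty := ⟨cw, hcw⟩
  set c0 := sInf {c : ℕ | (c, v) ∈ D ∧ (c, v + 1) ∉ D} with hc0def
  obtain ⟨hc0m, hc0nm⟩ : (c0, v) ∈ D ∧ (c0, v + 1) ∉ D := Nat.sInf_mem hCcne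
  have hc0min : ∀ e, (e, v) ∈ D → (e, v + 1) ∉ D → c0 ≤ e := fun e h1 h2 =>
    Nat.sInf_le ⟨h1, h2⟩
  have hv1 : 1 ≤ v := (hbox _ hc0m).2.1
  have hvn1 : v + 1 ≤ n := by omega
  have hc01 : 1 ≤ c0 := (hbox _ hc0m).1
  -- no candidates above v
  have hnc' : ∀ c t, v < t → t < n → (c, t) ∈ D → (c, t + 1) ∈ D := by
    intro c t h1 h2 hm
    by_contra hcon
    have := hCmax t ⟨h2, c, hm, hcon⟩
    omega
  have fullA : ∀ c t, (c, t) ∈ D → v < t → cnt n D c t = n + 1 - t :=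
    fun c t hm hvt => cnt_of_climb hbox hnc' hm hvt
  -- column bound above v for c0
  have hLb : cnt n D c0 (v + 1) ≤ n - v - 1 := by
    have hgap : cnt n D c0 (v + 1) = cnt n D c0 (v + 2) := by
      apply cnt_gap n D c0 (by omega)
      intro t ht1 ht2
      have : t = v + 1 := by omega
      rw [this]
      exact hc0nm
    have := cnt_le n D c0 (v + 2)
    omega
  -- rightmost condition
  have hrm : ∀ e, (e, v + 1) ∈ D → e ≤ c0 := by
    intro e hme
    by_contra hcon
    have h1 : cnt n D e (v + 1) = n + 1 - (v + 1) := fullA e (v + 1) hme (by omega)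
    have h2 : cnt n D e (v + 1) ≤ cnt n D c0 (v + 1) :=
      nested_le n hnest hc01 (by omega) (v + 1)
    omega
  -- strictness in column c0 - 1
  have hstr : ∀ k, c0 = k + 2 → cnt n D c0 (v + 1) < cnt n D (k + 1) (v + 1) := by
    intro k hk
    by_contra hcon
    have hle : cnt n D c0 (v + 1) ≤ cnt n D (k + 1) (v + 1) :=
      nested_le n hnest (by omega) (by omega) (v + 1)
    have heq : cnt n D (k + 1) (v + 1) = cnt n D c0 (v + 1) := by omega
    have hbv : (k + 1, v) ∈ D := by
      by_contra hbno
      have h1 : cnt n D c0 v = 1 + cnt n D c0 (v + 1) := by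
        rw [cnt_split n D c0 (by omega), if_pos hc0m]
      have h2 : cnt n D (k + 1) v = 0 + cnt n D (k + 1) (v + 1) := by
        rw [cnt_split n D (k + 1) (by omega), if_neg hbno]
      have h3 : cnt n D c0 v ≤ cnt n D (k + 1) v :=
        nested_le n hnest (by omega) (by omega) v
      omega
    have hbv1 : (k + 1, v + 1) ∉ D := by
      intro hcon2
      have h1 : cnt n D (k + 1) (v + 1) = n + 1 - (v + 1) := fullA _ _ hcon2 (by omega)
      omega
    have := hc0min (k + 1) hbv hbv1
    omega
  -- the lifted diagram
  have hp' : (c0, v + 1) ∉ D := hc0nm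
  set D' := insert (c0, v + 1) (D \ {(c0, v)}) with hD'def
  have key : ∀ e s, cnt n D' e s + (if c0 = e ∧ s ≤ v ∧ v ≤ n then 1 else 0)
      = cnt n D e s + (if c0 = e ∧ s ≤ v + 1 ∧ v + 1 ≤ n then 1 else 0) := by
    intro e s
    have h := cnt_swap n D (p := (c0, v + 1)) (q := (c0, v)) hc0m (Or.inl hp') e s
    simpa using h
  have keyE : ∀ e s, e ≠ c0 → cnt n D' e s = cnt n D e s := by
    intro e s he
    have h := key e s
    rw [if_neg (fun hh => he hh.1.symm), if_neg (fun hh => he hh.1.symm)] at h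
    omega
  have keyF : ∀ s, s ≤ v → cnt n D' c0 s = cnt n D c0 s := by
    intro s hs
    have h := key c0 s
    rw [if_pos ⟨rfl, hs, by omega⟩, if_pos ⟨rfl, by omega, hvn1⟩] at h
    omega
  have keyG : ∀ s, v + 1 < s → cnt n D' c0 s = cnt n D c0 s := by
    intro s hs
    have h := key c0 s
    rw [if_neg (by omega : ¬(c0 = c0 ∧ s ≤ v ∧ v ≤ n)),
      if_neg (by omega : ¬(c0 = c0 ∧ s ≤ v + 1 ∧ v + 1 ≤ n))] at h
    omega
  have keyH : cnt n D' c0 (v + 1) = cnt n D c0 (v + 1) + 1 := by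
    have h := key c0 (v + 1)
    rw [if_neg (by omega : ¬(c0 = c0 ∧ v + 1 ≤ v ∧ v ≤ n)),
      if_pos ⟨rfl, le_rfl, hvn1⟩] at h
    omega
  have hVD' : Valid a n D' := by
    refine ⟨?_, ?_, ?_⟩
    · rintro p hp
      rcases hp with rfl | hp
      · exact ⟨hc01, by omega, hvn1⟩
      · exact hbox p hp.1
    · intro e s
      by_cases h2 : e + 2 = c0
      · rw [keyE (e + 1) s (by omega)]
        rcases le_or_gt s v with hs | hs
        · rw [← h2] at keyF
          rw [keyF s hs]
          exact hnest e s
        · rcases eq_or_lt_of_le (show v + 1 ≤ s by omega) with hs2 | hs2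
          · rw [← hs2]
            rw [← h2] at keyH
            have h5 := hstr e h2.symm
            rw [← h2] at h5
            omega
          · rw [← h2] at keyG
            rw [keyG s hs2]
            exact hnest e s
      · by_cases h3 : e + 1 = c0
        · rw [keyE (e + 2) s (by omega)]
          have hge : cnt n D c0 s ≤ cnt n D' c0 s := by
            rcases le_or_gt s v with hs | hs
            · rw [keyF s hs]
            · rcases eq_or_lt_of_le (show v + 1 ≤ s by omega) with hs2 | hs2
              · rw [← hs2]; omega
              · rw [keyG s hs2]
          rw [← h3] at hge
          have := hnest e s
          omega
        · rw [keyE (e + 2) s (by omega), keyE (e + 1) s (by omega)]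
          exact hnest e s
    · intro k
      by_cases hc : k + 1 = c0
      · rw [← hc] at keyF
        rw [keyF 1 hv1]
        exact hprof k
      · rw [keyE (k + 1) 1 (by omega)]
        exact hprof k
  refine ⟨D', hVD', ?_, ?_⟩
  · refine ⟨c0, v + 1, v, Set.mem_insert _ _, ?_, hv1, by omega, ?_, ?_, ?_⟩
    · rintro c' (hc' | hc')
      · rw [show c' = c0 from (Prod.mk.injEq _ _ _ _ ▸ hc').1]
      · exact hrm c' hc'.1
    · rintro (hc | hc)
      · exact absurd (Prod.mk.injEq _ _ _ _ ▸ hc).2 (by omega)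
      · exact hc.2 rfl
    · intro s h1 h2
      omega
    · exact (unswap hc0m (Or.inl hp')).symm
  · have hbnd : c0 ≤ Amax a n := valid_colbound ⟨hbox, hnest, hprof⟩ hc0m
    have h : mu (Amax a n) n D' + v = mu (Amax a n) n D + (v + 1) :=
      mu_swap (Amax a n) n D D' (c0, v + 1) (c0, v) hc0m hp'
        (fun x => by
          rw [hD'def]
          simp only [Set.mem_insert_iff, Set.mem_diff, Set.mem_singleton_iff]
          try tauto)
        (by
          rw [Finset.mem_product, Finset.mem_Icc, Finset.mem_Icc]
          exact ⟨⟨hc01, hbnd⟩, by omega, hvn1⟩)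
        (by
          rw [Finset.mem_product, Finset.mem_Icc, Finset.mem_Icc]
          exact ⟨⟨hc01, hbnd⟩, hv1, by omega⟩)
    omega

lemma valid_to_KD {n : ℕ} {a : ℕ → ℕ} (ha : ∀ i, n < i → a i = 0)
    (hinc : ∀ i j, 1 ≤ i → i ≤ j → j ≤ n → a i ≤ a j)
    {D : Diagram} (hV : Valid a n D) : D ∈ KD a := by
  have main : ∀ k (D : Diagram), Valid a n D →
      Amax a n * n * n + 1 - mu (Amax a n) n D ≤ k → D ∈ KD a := by
    intro k
    induction k with
    | zero =>
      intro D hV hk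
      have := mu_le (Amax a n) n D
      omega
    | succ k ih =>
      intro D hV hk
      by_cases hD : D = keyDiagram a
      · rw [hD]
        exact Relation.ReflTransGen.refl
      · obtain ⟨D', hV', hmove, hmu⟩ := lift ha hinc hV hD
        have hmem := ih D' hV' (by
          have := mu_le (Amax a n) n D'
          omega)
        exact Relation.ReflTransGen.tail hmem hmove
  exact main _ D hV le_rfl

theorem KD_eq_valid {n : ℕ} {a : ℕ → ℕ} (ha : ∀ i, n < i → a i = 0)
    (hinc : ∀ i j, 1 ≤ i → i ≤ j → j ≤ n → a i ≤ a j) :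
    KD a = {D | Valid a n D} :=
  Set.ext fun _ => ⟨KD_subset_valid ha, valid_to_KD ha hinc⟩

/-- Column insertion (bumping), processing columns left to right. -/
noncomputable def insCols : ℕ → Diagram → ℕ → ℕ → Diagram
  | 0, D, c, ρ => insert (c, ρ) D
  | fuel + 1, D, c, ρ =>
    if h : ((Finset.Icc 1 ρ).filter (fun s => (c, s) ∈ D)).Nonempty then
      insCols fuel
        (insert (c, ρ) (D \ {(c, ((Finset.Icc 1 ρ).filter (fun s => (c, s) ∈ D)).max' h)}))
        (c + 1) (((Finset.Icc 1 ρ).filter (fun s => (c, s) ∈ D)).max' h)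
    else insert (c, ρ) D

/-- Reverse bumping, processing columns right to left. -/
noncomputable def revCols (n : ℕ) : ℕ → Diagram → ℕ → Diagram × ℕ
  | 0, D, ρ => (D, ρ)
  | c + 1, D, ρ =>
    if h : ((Finset.Icc ρ n).filter (fun s => (c + 1, s) ∈ D)).Nonempty then
      revCols n c
        (insert (c + 1, ρ)
          (D \ {(c + 1, ((Finset.Icc ρ n).filter (fun s => (c + 1, s) ∈ D)).min' h)}))
        (((Finset.Icc ρ n).filter (fun s => (c + 1, s) ∈ D)).min' h)
    else (D, ρ)

lemma ins_stop (fuel : ℕ) (D : Diagram) (c ρ : ℕ)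
    (h : ∀ s, 1 ≤ s → s ≤ ρ → (c, s) ∉ D) :
    insCols fuel D c ρ = insert (c, ρ) D := by
  have hne : ¬((Finset.Icc 1 ρ).filter (fun s => (c, s) ∈ D)).Nonempty := by
    rw [Finset.filter_nonempty_iff]
    rintro ⟨s, hs, hm⟩
    rw [Finset.mem_Icc] at hs
    exact h s hs.1 hs.2 hm
  cases fuel with
  | zero => rfl
  | succ fuel => simp only [insCols, dif_neg hne]

lemma rw_insert {D : Diagram} (hfin : D.Finite) {p : ℕ × ℕ} (hp : p ∉ D) (i : ℕ) :
    rowWeight (insert p D) i = rowWeight D i + (if p.2 = i then 1 else 0) := by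
  unfold rowWeight
  by_cases hpi : p.2 = i
  · rw [if_pos hpi]
    have hset : {x : ℕ × ℕ | x ∈ insert p D ∧ x.2 = i}
        = insert p {x : ℕ × ℕ | x ∈ D ∧ x.2 = i} := by
      ext x
      simp only [Set.mem_insert_iff, Set.mem_setOf_eq]
      constructor
      · rintro ⟨(rfl | hx), h2⟩
        · exact Or.inl rfl
        · exact Or.inr ⟨hx, h2⟩
      · rintro (rfl | ⟨hx, h2⟩)
        · exact ⟨Or.inl rfl, hpi⟩
        · exact ⟨Or.inr hx, h2⟩
    rw [hset, Set.ncard_insert_of_notMem (fun hc => hp hc.1)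
      (hfin.subset (fun x hx => hx.1))]
  · rw [if_neg hpi, add_zero]
    congr 1
    ext x
    simp only [Set.mem_insert_iff, Set.mem_setOf_eq]
    constructor
    · rintro ⟨(rfl | hx), h2⟩
      · exact absurd h2 hpi
      · exact ⟨hx, h2⟩
    · rintro ⟨hx, h2⟩
      exact ⟨Or.inr hx, h2⟩

lemma rw_del {D : Diagram} (hfin : D.Finite) {q : ℕ × ℕ} (hq : q ∈ D) (i : ℕ) :
    rowWeight D i = rowWeight (D \ {q}) i + (if q.2 = i then 1 else 0) := by
  conv_lhs => rw [← insert_diff_self_mem hq]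
  exact rw_insert (hfin.subset Set.diff_subset) (by simp) i

lemma rw_swap {D : Diagram} (hfin : D.Finite) {p q : ℕ × ℕ} (hq : q ∈ D)
    (hp : p ∉ D ∨ p = q) (i : ℕ) :
    rowWeight (insert p (D \ {q})) i + (if q.2 = i then 1 else 0)
      = rowWeight D i + (if p.2 = i then 1 else 0) := by
  rcases hp with hp | rfl
  · rw [rw_insert (hfin.subset Set.diff_subset) (by simp [hp]) i, rw_del hfin hq i]
    ring
  · rw [insert_diff_self_mem hq]

/-- The conclusions of the insertion master lemma. -/
def InsConcl (n : ℕ) (D R : Diagram) (c ρ : ℕ) : Prop :=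
  ∃ c' ρ',
    c ≤ c' ∧ 1 ≤ ρ' ∧ ρ' ≤ ρ ∧
    box n R ∧ nested n R ∧ R.Finite ∧
    (∀ e, cnt n R e 1 = cnt n D e 1 + (if e = c' then 1 else 0)) ∧
    (cnt n D c' 1 < (if c' = 1 then n else cnt n D (c' - 1) 1)) ∧
    (∀ i, rowWeight R i = rowWeight D i + (if i = ρ then 1 else 0)) ∧
    ((c', ρ') ∈ R ∧ ∀ s, (c', s) ∈ R → ρ' ≤ s) ∧
    revCols n (c' - 1) (R \ {(c', ρ')}) ρ' = revCols n (c - 1) D ρ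

lemma ins_master_stop (n : ℕ) (D : Diagram) (c ρ : ℕ)
    (hbox : box n D) (hnest : nested n D) (hfin : D.Finite)
    (hc : 1 ≤ c) (hρ1 : 1 ≤ ρ) (hρn : ρ ≤ n)
    (hkinv : ∀ k, c = k + 2 → cnt n D (k + 2) (ρ + 1) < cnt n D (k + 1) ρ)
    (hempty : ∀ s, 1 ≤ s → s ≤ ρ → (c, s) ∉ D) :
    InsConcl n D (insert (c, ρ) D) c ρ := by
  have hnotin : (c, ρ) ∉ D := hempty ρ hρ1 le_rfl
  have hins : ∀ e s, cnt n (insert (c, ρ) D) e s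
      = cnt n D e s + (if c = e ∧ s ≤ ρ ∧ ρ ≤ n then 1 else 0) := by
    intro e s
    simpa using cnt_insert n D hnotin e s
  have hgap : ∀ s, s ≤ ρ + 1 → cnt n D c s = cnt n D c (ρ + 1) := by
    intro s hs2
    refine cnt_gap n D c (by omega) (fun t ht1 ht2 => ?_)
    by_cases ht0 : t = 0
    · subst ht0
      intro hm
      exact absurd (hbox _ hm).2.1 (by omega)
    · exact hempty t (by omega) ht2
  refine ⟨c, ρ, le_rfl, hρ1, le_rfl, ?_, ?_, hfin.insert _, ?_, ?_, ?_, ⟨?_, ?_⟩, ?_⟩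
  · rintro p (rfl | hp)
    · exact ⟨hc, hρ1, hρn⟩
    · exact hbox p hp
  · intro e s
    have h2 := hins (e + 2) s
    have h1 := hins (e + 1) s
    have hn := hnest e s
    by_cases hc2 : c = e + 2
    · by_cases hsρ : s ≤ ρ
      · rw [if_pos ⟨hc2, hsρ, hρn⟩] at h2
        rw [if_neg (by omega)] at h1
        have h4 := hgap s (by omega)
        rw [hc2] at h4
        have h5 := hkinv e hc2
        have h6 : cnt n D (e + 1) ρ ≤ cnt n D (e + 1) s := cnt_mono n D (e + 1) hsρ
        omega
      · rw [if_neg (by omega)] at h2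
        rw [if_neg (by omega)] at h1
        omega
    · by_cases hc1 : c = e + 1
      · rw [if_neg (by omega)] at h2
        have h7 : cnt n D (e + 1) s ≤ cnt n (insert (c, ρ) D) (e + 1) s := by
          rw [h1]
          omega
        omega
      · rw [if_neg (by omega)] at h2
        rw [if_neg (by omega)] at h1
        omega
  · intro e
    have h := hins e 1
    by_cases hce : c = e
    · rw [if_pos ⟨hce, hρ1, hρn⟩] at h
      rw [if_pos hce.symm, h]
    · rw [if_neg (fun hh => hce hh.1)] at h
      rw [if_neg (fun hh => hce hh.symm), h, add_zero]
  · by_cases hc1 : c = 1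
    · subst hc1
      rw [if_pos rfl]
      have h1 := hgap 1 (by omega)
      have h2 := cnt_le n D 1 (ρ + 1)
      omega
    · obtain ⟨k, hk⟩ : ∃ k, c = k + 2 := ⟨c - 2, by omega⟩
      subst hk
      rw [if_neg hc1, show k + 2 - 1 = k + 1 from by omega]
      have h1 := hkinv k rfl
      have h2 := hgap 1 (by omega)
      have h3 : cnt n D (k + 1) ρ ≤ cnt n D (k + 1) 1 := cnt_mono n D (k + 1) hρ1
      omega
  · intro i
    rw [rw_insert hfin hnotin i]
    by_cases hi : i = ρ
    · rw [if_pos hi, if_pos hi.symm]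
    · rw [if_neg hi, if_neg (fun hh => hi hh.symm)]
  · exact Set.mem_insert _ _
  · rintro s (hs | hs)
    · rw [show s = ρ from (Prod.mk.injEq _ _ _ _ ▸ hs).2]
    · by_contra hcon
      exact hempty s (hbox _ hs).2.1 (by omega) hs
  · rw [Set.insert_diff_self_of_notMem hnotin]

lemma rev_step (n k : ℕ) (E : Diagram) (π ρ₀ : ℕ)
    (h1 : π ≤ ρ₀) (h2 : ρ₀ ≤ n) (h3 : (k + 1, ρ₀) ∈ E)
    (hmin : ∀ x, π ≤ x → x ≤ n → (k + 1, x) ∈ E → ρ₀ ≤ x) :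
    revCols n (k + 1) E π = revCols n k (insert (k + 1, π) (E \ {(k + 1, ρ₀)})) ρ₀ := by
  have hmem : ρ₀ ∈ (Finset.Icc π n).filter (fun s => (k + 1, s) ∈ E) :=
    Finset.mem_filter.2 ⟨Finset.mem_Icc.2 ⟨h1, h2⟩, h3⟩
  have hne : ((Finset.Icc π n).filter (fun s => (k + 1, s) ∈ E)).Nonempty := ⟨ρ₀, hmem⟩
  have hval : ((Finset.Icc π n).filter (fun s => (k + 1, s) ∈ E)).min' hne = ρ₀ := by
    refine le_antisymm (Finset.min'_le _ _ hmem) (Finset.le_min' _ _ _ ?_)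
    intro x hx
    rw [Finset.mem_filter, Finset.mem_Icc] at hx
    exact hmin x hx.1.1 hx.1.2 hx.2
  simp only [revCols, dif_pos hne, hval]

lemma ins_step (fuel : ℕ) (E : Diagram) (c ρ ρ₀ : ℕ)
    (h1 : 1 ≤ ρ₀) (h2 : ρ₀ ≤ ρ) (h3 : (c, ρ₀) ∈ E)
    (hmax : ∀ x, 1 ≤ x → x ≤ ρ → (c, x) ∈ E → x ≤ ρ₀) :
    insCols (fuel + 1) E c ρ = insCols fuel (insert (c, ρ) (E \ {(c, ρ₀)})) (c + 1) ρ₀ := by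
  have hmem : ρ₀ ∈ (Finset.Icc 1 ρ).filter (fun s => (c, s) ∈ E) :=
    Finset.mem_filter.2 ⟨Finset.mem_Icc.2 ⟨h1, h2⟩, h3⟩
  have hne : ((Finset.Icc 1 ρ).filter (fun s => (c, s) ∈ E)).Nonempty := ⟨ρ₀, hmem⟩
  have hval : ((Finset.Icc 1 ρ).filter (fun s => (c, s) ∈ E)).max' hne = ρ₀ := by
    refine le_antisymm (Finset.max'_le _ hne _ ?_) (Finset.le_max' _ _ hmem)
    intro x hx
    rw [Finset.mem_filter, Finset.mem_Icc] at hx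
    exact hmax x hx.1.1 hx.1.2 hx.2
  simp only [insCols, dif_pos hne, hval]

theorem ins_master (n : ℕ) : ∀ (fuel : ℕ) (D : Diagram) (c ρ : ℕ),
    box n D → nested n D → D.Finite → 1 ≤ c → 1 ≤ ρ → ρ ≤ n →
    (∀ p ∈ D, p.1 < c + fuel) →
    (∀ k, c = k + 2 → cnt n D (k + 2) (ρ + 1) < cnt n D (k + 1) ρ) →
    InsConcl n D (insCols fuel D c ρ) c ρ := by
  intro fuel
  induction fuel with
  | zero =>
    intro D c ρ hbox hnest hfin hc hρ1 hρn hcolb hkinv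
    have hempty : ∀ s, 1 ≤ s → s ≤ ρ → (c, s) ∉ D := by
      intro s _ _ hm
      have h2 : c < c + 0 := hcolb (c, s) hm
      omega
    exact ins_master_stop n D c ρ hbox hnest hfin hc hρ1 hρn hkinv hempty
  | succ fuel ih =>
    intro D c ρ hbox hnest hfin hc hρ1 hρn hcolb hkinv
    by_cases h : ((Finset.Icc 1 ρ).filter (fun s => (c, s) ∈ D)).Nonempty
    · -- bump case
      set ρ' := ((Finset.Icc 1 ρ).filter (fun s => (c, s) ∈ D)).max' h with hρ'def
      have hmem' : ρ' ∈ (Finset.Icc 1 ρ).filter (fun s => (c, s) ∈ D) := Finset.max'_mem _ h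
      rw [Finset.mem_filter, Finset.mem_Icc] at hmem'
      obtain ⟨⟨hρ'1, hρ'ρ⟩, hρ'D⟩ := hmem'
      have hρ'n : ρ' ≤ n := by omega
      have hmax : ∀ s, 1 ≤ s → s ≤ ρ → (c, s) ∈ D → s ≤ ρ' := fun s h1 h2 hm =>
        Finset.le_max' _ s (Finset.mem_filter.2 ⟨Finset.mem_Icc.2 ⟨h1, h2⟩, hm⟩)
      have hcase : (c, ρ) ∉ D ∨ (c, ρ) = (c, ρ') := by
        by_cases hm : (c, ρ) ∈ D
        · right
          have h2 := hmax ρ hρ1 le_rfl hm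
          have h3 : ρ = ρ' := by omega
          rw [h3]
        · left; exact hm
      set D' := insert (c, ρ) (D \ {(c, ρ')}) with hD'def
      have hunfold : insCols (fuel + 1) D c ρ = insCols fuel D' (c + 1) ρ' := by
        simp only [insCols, dif_pos h]
        rfl
      rw [hunfold]
      have keyI : ∀ e s, cnt n D' e s + (if c = e ∧ s ≤ ρ' ∧ ρ' ≤ n then 1 else 0)
          = cnt n D e s + (if c = e ∧ s ≤ ρ ∧ ρ ≤ n then 1 else 0) := by
        intro e s
        have h2 := cnt_swap n D (p := (c, ρ)) (q := (c, ρ')) hρ'D hcase e s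
        simpa [hD'def] using h2
      have keyJ : ∀ e s, e ≠ c → cnt n D' e s = cnt n D e s := by
        intro e s he
        have hh := keyI e s
        rw [if_neg (fun x => he x.1.symm), if_neg (fun x => he x.1.symm)] at hh
        omega
      have keyKc : ∀ e s, c = e → s ≤ ρ' → cnt n D' e s = cnt n D e s := by
        intro e s hce hs
        have hh := keyI e s
        rw [if_pos ⟨hce, hs, hρ'n⟩, if_pos ⟨hce, by omega, hρn⟩] at hh
        omega
      have keyLc : ∀ e s, c = e → ρ < s → cnt n D' e s = cnt n D e s := by
        intro e s hce hs
        have hh := keyI e s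
        rw [if_neg (by omega), if_neg (by omega)] at hh
        omega
      have keyMc : ∀ e s, c = e → ρ' < s → s ≤ ρ → cnt n D' e s = cnt n D e s + 1 := by
        intro e s hce hs1 hs2
        have hh := keyI e s
        rw [if_neg (by omega), if_pos ⟨hce, hs2, hρn⟩] at hh
        omega
      have hgapc : ∀ s, ρ' < s → s ≤ ρ + 1 → cnt n D c s = cnt n D c (ρ + 1) := by
        intro s h1 h2
        refine cnt_gap n D c (by omega) (fun t ht1 ht2 hm => ?_)
        have := hmax t (by omega) ht2 hm
        omega
      have hbox' : box n D' := by
        rw [hD'def]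
        rintro p (rfl | hp)
        · exact ⟨hc, hρ1, hρn⟩
        · exact hbox p hp.1
      have hnest' : nested n D' := by
        intro e s
        by_cases hc2 : c = e + 2
        · rcases le_or_gt s ρ' with hs | hs
          · rw [keyKc (e + 2) s hc2 hs, keyJ (e + 1) s (by omega)]
            exact hnest e s
          · rcases le_or_gt s ρ with hs2 | hs2
            · rw [keyMc (e + 2) s hc2 hs hs2, keyJ (e + 1) s (by omega)]
              have h4 : cnt n D (e + 2) s = cnt n D (e + 2) (ρ + 1) := by
                rw [← hc2]
                exact hgapc s hs (by omega)
              have h5 := hkinv e hc2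
              have h6 : cnt n D (e + 1) ρ ≤ cnt n D (e + 1) s := cnt_mono n D (e + 1) hs2
              omega
            · rw [keyLc (e + 2) s hc2 hs2, keyJ (e + 1) s (by omega)]
              exact hnest e s
        · by_cases hc1 : c = e + 1
          · rw [keyJ (e + 2) s (by omega)]
            have hge : cnt n D (e + 1) s ≤ cnt n D' (e + 1) s := by
              rcases le_or_gt s ρ' with hs | hs
              · rw [keyKc (e + 1) s hc1 hs]
              · rcases le_or_gt s ρ with hs2 | hs2
                · rw [keyMc (e + 1) s hc1 hs hs2]
                  omega
                · rw [keyLc (e + 1) s hc1 hs2]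
            have := hnest e s
            omega
          · rw [keyJ (e + 2) s (by omega), keyJ (e + 1) s (by omega)]
            exact hnest e s
      have hfin' : D'.Finite := by
        rw [hD'def]
        exact hfin.diff.insert _
      have hcolb' : ∀ p ∈ D', p.1 < (c + 1) + fuel := by
        rw [hD'def]
        rintro p (rfl | hp)
        · omega
        · have := hcolb p hp.1
          omega
      have hkinv' : ∀ k, c + 1 = k + 2 → cnt n D' (k + 2) (ρ' + 1) < cnt n D' (k + 1) ρ' := by
        intro k hk
        have hkc : c = k + 1 := by omega
        have h1 : cnt n D' (k + 2) (ρ' + 1) = cnt n D (k + 2) (ρ' + 1) := keyJ _ _ (by omega)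
        have h2 : cnt n D' (k + 1) ρ' = cnt n D (k + 1) ρ' := keyKc (k + 1) ρ' hkc le_rfl
        have h3 : cnt n D (k + 2) (ρ' + 1) ≤ cnt n D (k + 1) (ρ' + 1) := hnest k (ρ' + 1)
        have h4 : cnt n D (k + 1) ρ' = 1 + cnt n D (k + 1) (ρ' + 1) := by
          rw [cnt_split n D (k + 1) hρ'n, if_pos (by rw [← hkc]; exact hρ'D)]
        omega
      obtain ⟨c', ρ'', hcc', hρ''1, hρ''ρ', hbox'', hnest'', hfin'', hprof'', hgrow'',
        hrw'', ⟨hmem'', hmin''⟩, hrev''⟩ :=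
        ih D' (c + 1) ρ' hbox' hnest' hfin' (by omega) hρ'1 hρ'n hcolb' hkinv'
      have hsz : ∀ e, cnt n D' e 1 = cnt n D e 1 := by
        intro e
        have hh := keyI e 1
        by_cases hce : c = e
        · rw [if_pos ⟨hce, hρ'1, hρ'n⟩, if_pos ⟨hce, hρ1, hρn⟩] at hh
          omega
        · rw [if_neg (fun x => hce x.1), if_neg (fun x => hce x.1)] at hh
          omega
      refine ⟨c', ρ'', by omega, hρ''1, by omega, hbox'', hnest'', hfin'', ?_, ?_, ?_,
        ⟨hmem'', hmin''⟩, ?_⟩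
      · intro e
        rw [hprof'' e, hsz e]
      · have hc'1 : c' ≠ 1 := by omega
        rw [if_neg hc'1]
        rw [if_neg hc'1, hsz c', hsz (c' - 1)] at hgrow''
        exact hgrow''
      · intro i
        have hrwswap : rowWeight D' i + (if ρ' = i then 1 else 0)
            = rowWeight D i + (if ρ = i then 1 else 0) := by
          have h2 := rw_swap hfin (p := (c, ρ)) (q := (c, ρ')) hρ'D hcase i
          simpa [hD'def] using h2
        rw [hrw'' i]
        by_cases h3 : i = ρ'
        · rw [if_pos h3]
          rw [if_pos h3.symm] at hrwswap
          by_cases h4 : i = ρ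
          · rw [if_pos h4]
            rw [if_pos h4.symm] at hrwswap
            omega
          · rw [if_neg h4]
            rw [if_neg (fun x => h4 x.symm)] at hrwswap
            omega
        · rw [if_neg h3]
          rw [if_neg (fun x => h3 x.symm)] at hrwswap
          by_cases h4 : i = ρ
          · rw [if_pos h4]
            rw [if_pos h4.symm] at hrwswap
            omega
          · rw [if_neg h4]
            rw [if_neg (fun x => h4 x.symm)] at hrwswap
            omega
      · have hstep : revCols n c (insert (c, ρ) (D \ {(c, ρ')})) ρ'
            = revCols n (c - 1) D ρ := by
          obtain ⟨k, rfl⟩ : ∃ k, c = k + 1 := ⟨c - 1, by omega⟩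
          have hEQ := rev_step n k (insert (k + 1, ρ) (D \ {(k + 1, ρ')})) ρ' ρ
            hρ'ρ hρn (Set.mem_insert _ _)
            (by
              intro x hx1 hx2 hxD
              rcases hxD with hxx | ⟨hxD2, hxne⟩
              · have hxρ : x = ρ := by simpa using congrArg Prod.snd hxx
                omega
              · by_contra hcon
                have h5 := hmax x (by omega) (by omega) hxD2
                have h6 : x = ρ' := by omega
                exact hxne (by rw [h6]; rfl))
          rw [hEQ, show k + 1 - 1 = k from rfl, unswap hρ'D hcase]
        rw [hrev'', show c + 1 - 1 = c from rfl, hD'def]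
        exact hstep
    · -- stop case
      have hempty : ∀ s, 1 ≤ s → s ≤ ρ → (c, s) ∉ D := by
        intro s h1 h2 hm
        exact h ⟨s, Finset.mem_filter.2 ⟨Finset.mem_Icc.2 ⟨h1, h2⟩, hm⟩⟩
      rw [ins_stop (fuel + 1) D c ρ hempty]
      exact ins_master_stop n D c ρ hbox hnest hfin hc hρ1 hρn hkinv hempty

theorem rev_master (n : ℕ) : ∀ (c : ℕ) (D : Diagram) (ρ : ℕ),
    box n D → nested n D → D.Finite → 1 ≤ ρ → ρ ≤ n →
    (∀ k, c = k + 1 → 1 ≤ cnt n D (k + 1) ρ) →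
    (∀ k, c = k + 1 → ∀ s, ρ < s → cnt n D (k + 2) s + 1 ≤ cnt n D (k + 1) ρ) →
    ∃ D₀ r, revCols n c D ρ = (D₀, r) ∧ box n D₀ ∧ nested n D₀ ∧ D₀.Finite ∧
      1 ≤ r ∧ r ≤ n ∧ (∀ e, cnt n D₀ e 1 = cnt n D e 1) ∧
      (∀ fuel, insCols (fuel + c) D₀ 1 r = insCols fuel D (c + 1) ρ) := by
  intro c
  induction c with
  | zero =>
    intro D ρ hbox hnest hfin hρ1 hρn _ _
    exact ⟨D, ρ, rfl, hbox, hnest, hfin, hρ1, hρn, fun _ => rfl, fun _ => rfl⟩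
  | succ c ih =>
    intro D ρ hbox hnest hfin hρ1 hρn hJ3 hJ4
    have hJ3c := hJ3 c rfl
    obtain ⟨ρ'', hρρ'', hρ''n, hρ''D, hminA⟩ : ∃ t, ρ ≤ t ∧ t ≤ n ∧ (c + 1, t) ∈ D ∧
        ∀ x, ρ ≤ x → x ≤ n → (c + 1, x) ∈ D → t ≤ x := by
      obtain ⟨t0, ht1, ht2, ht3⟩ := cnt_mem_of_pos n D hJ3c
      have hmem : t0 ∈ (Finset.Icc ρ n).filter (fun s => (c + 1, s) ∈ D) :=
        Finset.mem_filter.2 ⟨Finset.mem_Icc.2 ⟨ht1, ht2⟩, ht3⟩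
      have hne : ((Finset.Icc ρ n).filter (fun s => (c + 1, s) ∈ D)).Nonempty := ⟨t0, hmem⟩
      have hmm := Finset.min'_mem _ hne
      rw [Finset.mem_filter, Finset.mem_Icc] at hmm
      refine ⟨_, hmm.1.1, hmm.1.2, hmm.2, fun x hx1 hx2 hxD => ?_⟩
      exact Finset.min'_le _ x (Finset.mem_filter.2 ⟨Finset.mem_Icc.2 ⟨hx1, hx2⟩, hxD⟩)
    have hρ''1 : 1 ≤ ρ'' := by omega
    have hcase : (c + 1, ρ) ∉ D ∨ (c + 1, ρ) = (c + 1, ρ'') := by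
      by_cases hm : (c + 1, ρ) ∈ D
      · right
        have h2 := hminA ρ le_rfl hρn hm
        have h3 : ρ = ρ'' := by omega
        rw [h3]
      · left; exact hm
    set E := insert (c + 1, ρ) (D \ {(c + 1, ρ'')}) with hEdef
    have hunfold : revCols n (c + 1) D ρ = revCols n c E ρ'' := by
      rw [rev_step n c D ρ ρ'' hρρ'' hρ''n hρ''D hminA]
    have keyI : ∀ e s, cnt n E e s + (if c + 1 = e ∧ s ≤ ρ'' ∧ ρ'' ≤ n then 1 else 0)
        = cnt n D e s + (if c + 1 = e ∧ s ≤ ρ ∧ ρ ≤ n then 1 else 0) := by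
      intro e s
      have h2 := cnt_swap n D (p := (c + 1, ρ)) (q := (c + 1, ρ'')) hρ''D hcase e s
      simpa [hEdef] using h2
    have keyJ : ∀ e s, e ≠ c + 1 → cnt n E e s = cnt n D e s := by
      intro e s he
      have hh := keyI e s
      rw [if_neg (fun x => he x.1.symm), if_neg (fun x => he x.1.symm)] at hh
      omega
    have keyK : ∀ e s, c + 1 = e → s ≤ ρ → cnt n E e s = cnt n D e s := by
      intro e s hce hs
      have hh := keyI e s
      rw [if_pos ⟨hce, by omega, hρ''n⟩, if_pos ⟨hce, hs, hρn⟩] at hh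
      omega
    have keyL : ∀ e s, c + 1 = e → ρ'' < s → cnt n E e s = cnt n D e s := by
      intro e s hce hs
      have hh := keyI e s
      rw [if_neg (by omega), if_neg (by omega)] at hh
      omega
    have keyM : ∀ e s, c + 1 = e → ρ < s → s ≤ ρ'' → cnt n E e s + 1 = cnt n D e s := by
      intro e s hce hs1 hs2
      have hh := keyI e s
      rw [if_pos ⟨hce, hs2, hρ''n⟩, if_neg (by omega)] at hh
      omega
    have hgapS : ∀ s, ρ ≤ s → s ≤ ρ'' → cnt n D (c + 1) s = cnt n D (c + 1) ρ'' := by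
      intro s hs1 hs2
      have h2 : cnt n D (c + 1) s = cnt n D (c + 1) (ρ'' - 1 + 1) := by
        refine cnt_gap n D (c + 1) (by omega) (fun t ht1 ht2 hm => ?_)
        have := hminA t (by omega) (by omega) hm
        omega
      rw [show ρ'' - 1 + 1 = ρ'' from by omega] at h2
      exact h2
    have hboxE : box n E := by
      rw [hEdef]
      rintro p (rfl | hp)
      · exact ⟨by omega, hρ1, hρn⟩
      · exact hbox p hp.1
    have hfinE : E.Finite := by
      rw [hEdef]
      exact hfin.diff.insert _
    have hnestE : nested n E := by
      intro e s
      by_cases hc2 : c + 1 = e + 2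
      · have hle : cnt n E (e + 2) s ≤ cnt n D (e + 2) s := by
          rcases le_or_gt s ρ with hs | hs
          · rw [keyK (e + 2) s hc2 hs]
          · rcases le_or_gt s ρ'' with hs2 | hs2
            · have := keyM (e + 2) s hc2 hs hs2
              omega
            · rw [keyL (e + 2) s hc2 hs2]
        rw [keyJ (e + 1) s (by omega)]
        have := hnest e s
        omega
      · by_cases hc1 : c + 1 = e + 1
        · rw [keyJ (e + 2) s (by omega)]
          rcases le_or_gt s ρ with hs | hs
          · rw [keyK (e + 1) s hc1 hs]
            exact hnest e s
          · rcases le_or_gt s ρ'' with hs2 | hs2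
            · have h4 := keyM (e + 1) s hc1 hs hs2
              have h5 : cnt n D (e + 2) s + 1 ≤ cnt n D (e + 1) ρ := by
                have := hJ4 c rfl s hs
                rw [← hc1]
                rw [show c + 2 = e + 2 from by omega] at this
                exact this
              have h6 : cnt n D (e + 1) ρ = cnt n D (e + 1) s := by
                rw [← hc1, hgapS ρ le_rfl hρρ'', hgapS s (by omega) hs2]
              omega
            · rw [keyL (e + 1) s hc1 hs2]
              exact hnest e s
        · rw [keyJ (e + 2) s (by omega), keyJ (e + 1) s (by omega)]
          exact hnest e s
    have hJ3' : ∀ k, c = k + 1 → 1 ≤ cnt n E (k + 1) ρ'' := by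
      intro k hk
      have h1 : cnt n E (k + 1) ρ'' = cnt n D (k + 1) ρ'' := keyJ (k + 1) ρ'' (by omega)
      have h2 : cnt n D (k + 2) ρ'' ≤ cnt n D (k + 1) ρ'' := hnest k ρ''
      have h3 : 1 ≤ cnt n D (k + 2) ρ'' := by
        rw [show k + 2 = c + 1 from by omega]
        exact cnt_pos n D hρ''D le_rfl hρ''n
      omega
    have hJ4' : ∀ k, c = k + 1 → ∀ s, ρ'' < s → cnt n E (k + 2) s + 1 ≤ cnt n E (k + 1) ρ'' := by
      intro k hk s hs
      have h1 : cnt n E (k + 2) s = cnt n D (k + 2) s := keyL (k + 2) s (by omega) hs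
      have h2 : cnt n E (k + 1) ρ'' = cnt n D (k + 1) ρ'' := keyJ (k + 1) ρ'' (by omega)
      have h3 : cnt n D (k + 2) ρ'' ≤ cnt n D (k + 1) ρ'' := hnest k ρ''
      have h4 : cnt n D (k + 2) ρ'' = 1 + cnt n D (k + 2) (ρ'' + 1) := by
        rw [cnt_split n D (k + 2) hρ''n,
          if_pos (show (k + 2, ρ'') ∈ D by rw [show k + 2 = c + 1 from by omega]; exact hρ''D)]
      have h5 : cnt n D (k + 2) s ≤ cnt n D (k + 2) (ρ'' + 1) := cnt_mono n D (k + 2) (by omega)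
      omega
    obtain ⟨D₀, r, heq, hbox₀, hnest₀, hfin₀, hr1, hrn, hsz₀, hQ4⟩ :=
      ih E ρ'' hboxE hnestE hfinE hρ''1 hρ''n hJ3' hJ4'
    have hszE : ∀ e, cnt n E e 1 = cnt n D e 1 := by
      intro e
      have hh := keyI e 1
      by_cases hce : c + 1 = e
      · rw [if_pos ⟨hce, hρ''1, hρ''n⟩, if_pos ⟨hce, hρ1, hρn⟩] at hh
        omega
      · rw [if_neg (fun x => hce x.1), if_neg (fun x => hce x.1)] at hh
        omega
    refine ⟨D₀, r, by rw [hunfold]; exact heq, hbox₀, hnest₀, hfin₀, hr1, hrn, ?_, ?_⟩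
    · intro e
      rw [hsz₀ e, hszE e]
    · intro fuel
      rw [show fuel + (c + 1) = (fuel + 1) + c from by omega, hQ4 (fuel + 1), hEdef]
      rw [ins_step fuel _ (c + 1) ρ'' ρ hρ1 hρρ'' (Set.mem_insert _ _)
        (by
          intro x hx1 hx2 hxE
          rcases hxE with hxx | ⟨hxD2, hxne⟩
          · have : x = ρ := by simpa using congrArg Prod.snd hxx
            omega
          · by_contra hcon
            have h5 := hminA x (by omega) ((hbox _ hxD2).2.2) hxD2
            have h6 : x = ρ'' := by omega
            exact hxne (by rw [h6]; rfl))]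
      rw [unswap hρ''D hcase]

lemma valid_prof {a : ℕ → ℕ} {n : ℕ} {D : Diagram} (hV : Valid a n D) :
    ∀ e, 1 ≤ e → cnt n D e 1 = mcol a n e := by
  intro e he
  obtain ⟨k, rfl⟩ : ∃ k, e = k + 1 := ⟨e - 1, by omega⟩
  exact hV.2.2 k

lemma valid_finite {a : ℕ → ℕ} {n : ℕ} {D : Diagram} (hV : Valid a n D) : D.Finite := by
  refine Set.Finite.subset (Set.finite_Icc ((1 : ℕ), (1 : ℕ)) (Amax a n, n)) ?_
  intro p hp
  rw [Set.mem_Icc]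
  obtain ⟨h1, h2, h3⟩ := hV.1 p hp
  exact ⟨⟨h1, h2⟩, ⟨valid_colbound hV hp, h3⟩⟩

/-- The largest column index of a diagram. -/
noncomputable def maxCol (T : Diagram) : ℕ := sSup {c | ∃ r, (c, r) ∈ T}

lemma le_maxCol {a : ℕ → ℕ} {n : ℕ} {T : Diagram} (hV : Valid a n T) {p : ℕ × ℕ}
    (hp : p ∈ T) : p.1 ≤ maxCol T := by
  have hbdd : BddAbove {c | ∃ r, (c, r) ∈ T} := by
    refine ⟨Amax a n, fun c hc => ?_⟩
    obtain ⟨r, hr⟩ := hc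
    exact valid_colbound hV hr
  exact le_csSup hbdd ⟨p.2, by rw [Prod.mk.eta]; exact hp⟩

/-- The row of the unique cell of an element of `KD (eComp n)`. -/
noncomputable def theRow (U : Diagram) : ℕ := sSup {r | (1, r) ∈ U}

lemma theRow_singleton (r : ℕ) : theRow {((1 : ℕ), r)} = r := by
  unfold theRow
  have hset : {r' | ((1 : ℕ), r') ∈ ({((1 : ℕ), r)} : Diagram)} = {r} := by
    ext x
    simp [Prod.ext_iff]
  rw [hset, csSup_singleton]

lemma cnt_empty (n c s : ℕ) : cnt n (∅ : Diagram) c s = 0 := by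
  by_cases hs : n < s
  · exact cnt_zero n ∅ c hs
  · have h := cnt_gap n (∅ : Diagram) c (u := n) (s := s) (by omega) (fun t _ _ h => h)
    rw [h]
    exact cnt_zero n ∅ c (by omega)

lemma cnt_singleton (n : ℕ) (p : ℕ × ℕ) (c s : ℕ) :
    cnt n ({p} : Diagram) c s = if p.1 = c ∧ s ≤ p.2 ∧ p.2 ≤ n then 1 else 0 := by
  have h := cnt_insert n (∅ : Diagram) (p := p) (by simp) c s
  rw [cnt_empty, zero_add] at h
  rw [← h]
  congr 1
  rw [Set.insert_eq, Set.union_empty]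

lemma rowWeight_empty (i : ℕ) : rowWeight (∅ : Diagram) i = 0 := by
  unfold rowWeight
  convert Set.ncard_empty (ℕ × ℕ)
  ext x
  simp

lemma rw_singleton (p : ℕ × ℕ) (i : ℕ) :
    rowWeight ({p} : Diagram) i = if p.2 = i then 1 else 0 := by
  have h := rw_insert (D := (∅ : Diagram)) (Set.finite_empty) (p := p) (by simp) i
  rw [rowWeight_empty, zero_add] at h
  rw [← h]
  congr 1
  rw [Set.insert_eq, Set.union_empty]

lemma eComp_zero (n : ℕ) : ∀ i, n < i → eComp n i = 0 := by
  intro i hi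
  unfold eComp
  rw [if_neg (by omega)]

lemma eComp_inc (n : ℕ) : ∀ i j, 1 ≤ i → i ≤ j → j ≤ n → eComp n i ≤ eComp n j := by
  intro i j h1 h2 h3
  unfold eComp
  by_cases hi : i = n
  · rw [if_pos hi, if_pos (by omega)]
  · rw [if_neg hi]
    exact Nat.zero_le _

lemma mcol_eComp {n : ℕ} (hn : 1 ≤ n) : ∀ e, 1 ≤ e →
    mcol (eComp n) n e = if e = 1 then 1 else 0 := by
  intro e he
  unfold mcol
  by_cases he1 : e = 1
  · subst he1
    rw [if_pos rfl]
    have hset : (Finset.Icc 1 n).filter (fun r => 1 ≤ eComp n r) = {n} := by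
      ext x
      simp only [Finset.mem_filter, Finset.mem_Icc, Finset.mem_singleton]
      simp only [eComp]
      constructor
      · rintro ⟨⟨hx1, hx2⟩, hx3⟩
        by_contra hxn
        rw [if_neg hxn] at hx3
        omega
      · rintro rfl
        rw [if_pos rfl]
        exact ⟨⟨hn, le_rfl⟩, le_rfl⟩
    rw [hset, Finset.card_singleton]
  · rw [if_neg he1, Finset.card_eq_zero, Finset.filter_eq_empty_iff]
    intro x _
    unfold eComp
    split_ifs <;> omega

lemma valid_eComp_iff {n : ℕ} (hn : 1 ≤ n) (U : Diagram) :
    Valid (eComp n) n U ↔ ∃ r, 1 ≤ r ∧ r ≤ n ∧ U = {((1 : ℕ), r)} := by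
  constructor
  · rintro ⟨hbox, hnest, hprof⟩
    have hprof' : ∀ e, 1 ≤ e → cnt n U e 1 = mcol (eComp n) n e := by
      intro e he
      obtain ⟨k, rfl⟩ : ∃ k, e = k + 1 := ⟨e - 1, by omega⟩
      exact hprof k
    have h1 : cnt n U 1 1 = 1 := by
      rw [hprof' 1 le_rfl, mcol_eComp hn 1 le_rfl, if_pos rfl]
    obtain ⟨r, hr1, hrn, hrU⟩ := cnt_mem_of_pos n U (c := 1) (s := 1) (by omega)
    refine ⟨r, hr1, hrn, ?_⟩
    ext ⟨pc, pr⟩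
    simp only [Set.mem_singleton_iff, Prod.mk.injEq]
    constructor
    · intro hp
      have hb := hbox _ hp
      have hpc : pc = 1 := by
        by_contra hcon
        have h2 : 1 ≤ cnt n U pc 1 := cnt_pos n U hp hb.2.1 hb.2.2
        have h3 : cnt n U pc 1 = 0 := by
          rw [hprof' pc hb.1, mcol_eComp hn pc hb.1, if_neg hcon]
        omega
      rw [hpc] at hp
      refine ⟨hpc, ?_⟩
      by_contra hcon
      have h2 : ({pr, r} : Finset ℕ) ⊆ (Finset.Icc 1 n).filter (fun t => (1, t) ∈ U) := by
        intro x hx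
        rw [Finset.mem_insert, Finset.mem_singleton] at hx
        rcases hx with rfl | rfl
        · exact Finset.mem_filter.2 ⟨Finset.mem_Icc.2 ⟨hb.2.1, hb.2.2⟩, hp⟩
        · exact Finset.mem_filter.2 ⟨Finset.mem_Icc.2 ⟨hr1, hrn⟩, hrU⟩
      have h3 := Finset.card_le_card h2
      rw [Finset.card_pair hcon] at h3
      unfold cnt at h1
      omega
    · rintro ⟨rfl, rfl⟩
      exact hrU
  · rintro ⟨r, hr1, hrn, rfl⟩
    refine ⟨?_, ?_, ?_⟩
    · rintro p hp
      rw [Set.mem_singleton_iff] at hp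
      subst hp
      exact ⟨le_rfl, hr1, hrn⟩
    · intro c s
      have h0 := cnt_singleton n ((1 : ℕ), r) (c + 2) s
      rw [if_neg (by omega)] at h0
      omega
    · intro c
      rw [cnt_singleton n ((1 : ℕ), r) (c + 1) 1, mcol_eComp hn (c + 1) (by omega)]
      by_cases hc : c = 0
      · subst hc
        rw [if_pos (by omega), if_pos rfl]
      · rw [if_neg (by omega), if_neg (by omega)]

lemma mcol_bump (a : ℕ → ℕ) (n j : ℕ) (hj1 : 1 ≤ j) (hjn : j ≤ n) (e : ℕ) :
    mcol (a + eComp j) n e = mcol a n e + (if e = a j + 1 then 1 else 0) := by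
  unfold mcol
  by_cases he : e = a j + 1
  · subst he
    have hset : (Finset.Icc 1 n).filter (fun r => a j + 1 ≤ (a + eComp j) r)
        = insert j ((Finset.Icc 1 n).filter (fun r => a j + 1 ≤ a r)) := by
      ext x
      simp only [Finset.mem_filter, Finset.mem_insert, Finset.mem_Icc]
      simp only [Pi.add_apply, eComp]
      constructor
      · rintro ⟨hx, hcond⟩
        by_cases hxj : x = j
        · exact Or.inl hxj
        · right
          rw [if_neg hxj] at hcond
          exact ⟨hx, by omega⟩
      · rintro (rfl | ⟨hx, hcond⟩)
        · rw [if_pos rfl]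
          exact ⟨⟨hj1, hjn⟩, by omega⟩
        · refine ⟨hx, ?_⟩
          split_ifs with h
          · subst h; omega
          · omega
    rw [hset, Finset.card_insert_of_notMem (by
        rw [Finset.mem_filter]
        rintro ⟨-, hcon⟩
        omega),
      if_pos rfl]
  · rw [if_neg he, add_zero]
    congr 1
    apply Finset.filter_congr
    intro x _
    simp only [Pi.add_apply, eComp]
    split_ifs with h
    · subst h; constructor <;> intro <;> omega
    · constructor <;> intro <;> omega

lemma corner_of_growable {a : ℕ → ℕ} {n : ℕ} (hn : 1 ≤ n)
    (hinc : ∀ i j, 1 ≤ i → i ≤ j → j ≤ n → a i ≤ a j) {cs : ℕ} (hc1 : 1 ≤ cs)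
    (hgrow : mcol a n cs < (if cs = 1 then n else mcol a n (cs - 1))) :
    ∃ j, 1 ≤ j ∧ j ≤ n ∧ (j = n ∨ a j < a (j + 1)) ∧ a j + 1 = cs := by
  have hmn : mcol a n cs < n := by
    by_cases h1 : cs = 1
    · rw [if_pos h1] at hgrow
      exact hgrow
    · rw [if_neg h1] at hgrow
      exact lt_of_lt_of_le hgrow (mcol_le a n _)
  set m := mcol a n cs with hm
  have hj1 : 1 ≤ n - m := by omega
  have hjn : n - m ≤ n := by omega
  have hajlt : a (n - m) < cs := by
    by_contra hcon
    have h2 := (mcol_mem hinc hj1 hjn).1 (show cs ≤ a (n - m) by omega)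
    rw [← hm] at h2
    omega
  have hajge : cs - 1 ≤ a (n - m) := by
    by_cases h1 : cs = 1
    · omega
    · have h2 : n - mcol a n (cs - 1) < n - m := by
        rw [if_neg h1] at hgrow
        have := mcol_le a n (cs - 1)
        omega
      exact (mcol_mem hinc hj1 hjn).2 (by omega)
  refine ⟨n - m, hj1, hjn, ?_, by omega⟩
  by_cases hjn' : n - m = n
  · exact Or.inl hjn'
  · right
    have h2 : cs ≤ a (n - m + 1) := by
      refine (mcol_mem hinc (by omega) (by omega)).2 ?_
      rw [← hm]
      omega
    omega

lemma bump_inc {a : ℕ → ℕ} {n j : ℕ} (hinc : ∀ i j, 1 ≤ i → i ≤ j → j ≤ n → a i ≤ a j)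
    (hj1 : 1 ≤ j) (hjn : j ≤ n) (hcorner : j = n ∨ a j < a (j + 1)) :
    ∀ i i', 1 ≤ i → i ≤ i' → i' ≤ n → (a + eComp j) i ≤ (a + eComp j) i' := by
  intro i i' h1 h2 h3
  have hmono := hinc i i' h1 h2 h3
  simp only [Pi.add_apply, eComp]
  by_cases hi : i = j
  · by_cases hi' : i' = j
    · have hii' : i = i' := by omega
      rw [hii']
    · rw [if_pos hi, if_neg hi']
      rcases hcorner with hc | hc
      · omega
      · have h4 : a (j + 1) ≤ a i' := hinc (j + 1) i' (by omega) (by omega) h3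
        rw [hi]
        omega
  · by_cases hi' : i' = j
    · rw [if_neg hi, if_pos hi']
      omega
    · rw [if_neg hi, if_neg hi']
      omega

lemma bump_zero {a : ℕ → ℕ} {n j : ℕ} (ha : ∀ i, n < i → a i = 0) (hjn : j ≤ n) :
    ∀ i, n < i → (a + eComp j) i = 0 := by
  intro i hi
  simp only [Pi.add_apply, eComp]
  rw [ha i hi, if_neg (by omega)]

end S7

/-- For weakly increasing `a`, the target space is a disjoint
union and there is a weight-preserving bijection. -/
theorem statement7 (n : ℕ) (a : ℕ → ℕ) (hn : 1 ≤ n) (ha : ∀ i, n < i → a i = 0)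
    (hinc : ∀ i j, 1 ≤ i → i ≤ j → j ≤ n → a i ≤ a j) :
    (∃ φ : Diagram × Diagram → Diagram,
      Set.BijOn φ (KD a ×ˢ KD (eComp n))
        {T | ∃ j, 1 ≤ j ∧ j ≤ n ∧ (j = n ∨ a j < a (j + 1)) ∧ T ∈ KD (a + eComp j)} ∧
      ∀ T U : Diagram, T ∈ KD a → U ∈ KD (eComp n) →
        rowWeight (φ (T, U)) = rowWeight T + rowWeight U) ∧
    ∀ j j' : ℕ, 1 ≤ j → j ≤ n → (j = n ∨ a j < a (j + 1)) →
      1 ≤ j' → j' ≤ n → (j' = n ∨ a j' < a (j' + 1)) → j ≠ j' →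
      Disjoint (KD (a + eComp j)) (KD (a + eComp j')) := by
  have hKDa : KD a = {D | S7.Valid a n D} := S7.KD_eq_valid ha hinc
  have hKDe : KD (eComp n) = {D | S7.Valid (eComp n) n D} :=
    S7.KD_eq_valid (S7.eComp_zero n) (S7.eComp_inc n)
  have hKDb : ∀ j, 1 ≤ j → j ≤ n → (j = n ∨ a j < a (j + 1)) →
      KD (a + eComp j) = {D | S7.Valid (a + eComp j) n D} := fun j h1 h2 h3 =>
    S7.KD_eq_valid (S7.bump_zero ha h2) (S7.bump_inc hinc h1 h2 h3)
  have master : ∀ T U, T ∈ KD a → U ∈ KD (eComp n) →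
      ∃ r, 1 ≤ r ∧ r ≤ n ∧ U = {((1 : ℕ), r)} ∧ S7.theRow U = r ∧
        S7.InsConcl n T (S7.insCols (S7.maxCol T + 1) T 1 (S7.theRow U)) 1 r := by
    intro T U hT hU
    rw [hKDa, Set.mem_setOf_eq] at hT
    rw [hKDe, Set.mem_setOf_eq] at hU
    obtain ⟨r, hr1, hrn, rfl⟩ := (S7.valid_eComp_iff hn U).1 hU
    refine ⟨r, hr1, hrn, rfl, S7.theRow_singleton r, ?_⟩
    rw [S7.theRow_singleton r]
    exact S7.ins_master n (S7.maxCol T + 1) T 1 r hT.1 hT.2.1 (S7.valid_finite hT)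
      le_rfl hr1 hrn
      (fun p hp => by have h2 := S7.le_maxCol hT hp; omega)
      (fun k hk => absurd hk (by omega))
  constructor
  · refine ⟨fun P => S7.insCols (S7.maxCol P.1 + 1) P.1 1 (S7.theRow P.2), ⟨?_, ?_, ?_⟩, ?_⟩
    · -- MapsTo
      rintro ⟨T, U⟩ hTU
      rw [Set.mem_prod] at hTU
      obtain ⟨r, hr1, hrn, hUeq, hrow, concl⟩ := master T U hTU.1 hTU.2
      obtain ⟨c', ρ', hcc', hρ'1, hρ'r, hboxR, hnestR, hfinR, hprofR, hgrowR, hrwR,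
        hminR, hrevR⟩ := concl
      have hVT : S7.Valid a n T := by
        have h2 := hTU.1
        rwa [hKDa] at h2
      have hprofT := S7.valid_prof hVT
      have hc'1 : 1 ≤ c' := by omega
      have hgrow' : S7.mcol a n c' < (if c' = 1 then n else S7.mcol a n (c' - 1)) := by
        by_cases h1 : c' = 1
        · rw [if_pos h1] at hgrowR ⊢
          rw [← hprofT c' hc'1]
          exact hgrowR
        · rw [if_neg h1] at hgrowR ⊢
          rw [← hprofT c' hc'1, ← hprofT (c' - 1) (by omega)]
          exact hgrowR
      obtain ⟨j, hj1, hjn, hcorner, haj⟩ := S7.corner_of_growable hn hinc hc'1 hgrow'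
      refine ⟨j, hj1, hjn, hcorner, ?_⟩
      rw [hKDb j hj1 hjn hcorner, Set.mem_setOf_eq]
      refine ⟨hboxR, hnestR, ?_⟩
      intro k
      rw [hprofR (k + 1), hprofT (k + 1) (by omega),
        S7.mcol_bump a n j hj1 hjn (k + 1), haj]
    · -- InjOn
      rintro ⟨T, U⟩ hTU ⟨T', U'⟩ hTU' heq
      rw [Set.mem_prod] at hTU hTU'
      obtain ⟨r, hr1, hrn, hUeq, hrow, concl⟩ := master T U hTU.1 hTU.2
      obtain ⟨r', hr1', hrn', hUeq', hrow', concl'⟩ := master T' U' hTU'.1 hTU'.2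
      obtain ⟨c1, ρ1, hc1le, hρ11, hρ1r, _, _, _, hprof1, hgrow1, _, hmin1, hrev1⟩ := concl
      obtain ⟨c2, ρ2, hc2le, hρ21, hρ2r, _, _, _, hprof2, hgrow2, _, hmin2, hrev2⟩ := concl'
      have hR : S7.insCols (S7.maxCol T + 1) T 1 (S7.theRow U)
          = S7.insCols (S7.maxCol T' + 1) T' 1 (S7.theRow U') := heq
      have hVT : S7.Valid a n T := by have h2 := hTU.1; rwa [hKDa] at h2
      have hVT' : S7.Valid a n T' := by have h2 := hTU'.1; rwa [hKDa] at h2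
      have hc12 : c1 = c2 := by
        have h1 := hprof1 c1
        have h2 := hprof2 c1
        rw [if_pos rfl] at h1
        rw [hR] at h1
        rw [S7.valid_prof hVT c1 (by omega)] at h1
        rw [S7.valid_prof hVT' c1 (by omega)] at h2
        by_contra hne
        rw [if_neg hne] at h2
        omega
      subst hc12
      have hρ12 : ρ1 = ρ2 := by
        refine le_antisymm (hmin1.2 ρ2 ?_) (hmin2.2 ρ1 ?_)
        · rw [hR]; exact hmin2.1
        · rw [← hR]; exact hmin1.1
      subst hρ12
      rw [hR] at hrev1
      have h5 : ((T', r') : Diagram × ℕ) = ((T, r) : Diagram × ℕ) :=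
        hrev2.symm.trans hrev1
      rw [Prod.ext_iff] at h5
      have hTeq : T = T' := h5.1.symm
      have hreq : r = r' := h5.2.symm
      rw [Prod.ext_iff]
      exact ⟨hTeq, by rw [hUeq, hUeq', hreq]⟩
    · -- SurjOn
      rintro T' ⟨j, hj1, hjn, hcorner, hTmem⟩
      rw [hKDb j hj1 hjn hcorner, Set.mem_setOf_eq] at hTmem
      obtain ⟨hboxT', hnestT', hprofT'0⟩ := hTmem
      have hVT' : S7.Valid (a + eComp j) n T' := ⟨hboxT', hnestT', hprofT'0⟩
      have hprofT'' : ∀ e, 1 ≤ e →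
          S7.cnt n T' e 1 = S7.mcol a n e + (if e = a j + 1 then 1 else 0) := by
        intro e he
        rw [S7.valid_prof hVT' e he, S7.mcol_bump a n j hj1 hjn e]
      have hpos : 1 ≤ S7.cnt n T' (a j + 1) 1 := by
        rw [hprofT'' (a j + 1) (by omega), if_pos rfl]
        omega
      obtain ⟨ρ₀, hρ₀1, hρ₀n, hρ₀T', hρ₀min⟩ : ∃ t, 1 ≤ t ∧ t ≤ n ∧ (a j + 1, t) ∈ T' ∧
          ∀ x, 1 ≤ x → x ≤ n → (a j + 1, x) ∈ T' → t ≤ x := by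
        obtain ⟨t0, ht1, ht2, ht3⟩ := S7.cnt_mem_of_pos n T' hpos
        have hmem : t0 ∈ (Finset.Icc 1 n).filter (fun s => (a j + 1, s) ∈ T') :=
          Finset.mem_filter.2 ⟨Finset.mem_Icc.2 ⟨ht1, ht2⟩, ht3⟩
        have hne : ((Finset.Icc 1 n).filter (fun s => (a j + 1, s) ∈ T')).Nonempty :=
          ⟨t0, hmem⟩
        have hmm := Finset.min'_mem _ hne
        rw [Finset.mem_filter, Finset.mem_Icc] at hmm
        refine ⟨_, hmm.1.1, hmm.1.2, hmm.2, fun x hx1 hx2 hxD => ?_⟩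
        exact Finset.min'_le _ x (Finset.mem_filter.2 ⟨Finset.mem_Icc.2 ⟨hx1, hx2⟩, hxD⟩)
      have hfinT' : T'.Finite := S7.valid_finite hVT'
      have hdel : ∀ e s, S7.cnt n T' e s = S7.cnt n (T' \ {(a j + 1, ρ₀)}) e s
          + (if a j + 1 = e ∧ s ≤ ρ₀ ∧ ρ₀ ≤ n then 1 else 0) := by
        intro e s
        have h2 := S7.cnt_del n T' (q := (a j + 1, ρ₀)) hρ₀T' e s
        simpa using h2
      set E := T' \ {(a j + 1, ρ₀)} with hEdef
      have keyJ : ∀ e s, e ≠ a j + 1 → S7.cnt n E e s = S7.cnt n T' e s := by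
        intro e s he
        have h2 := hdel e s
        rw [if_neg (fun x => he x.1.symm)] at h2
        omega
      have keyLow : ∀ s, s ≤ ρ₀ → S7.cnt n E (a j + 1) s + 1 = S7.cnt n T' (a j + 1) s := by
        intro s hs
        have h2 := hdel (a j + 1) s
        rw [if_pos ⟨rfl, hs, hρ₀n⟩] at h2
        omega
      have keyHigh : ∀ s, ρ₀ < s → S7.cnt n E (a j + 1) s = S7.cnt n T' (a j + 1) s := by
        intro s hs
        have h2 := hdel (a j + 1) s
        rw [if_neg (by omega)] at h2
        omega
      have hgapT' : ∀ s, s ≤ ρ₀ → S7.cnt n T' (a j + 1) s = S7.cnt n T' (a j + 1) ρ₀ := by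
        intro s hs
        have h2 : S7.cnt n T' (a j + 1) s = S7.cnt n T' (a j + 1) (ρ₀ - 1 + 1) := by
          refine S7.cnt_gap n T' (a j + 1) (by omega) (fun t ht1 ht2 hm => ?_)
          have h3 := (hboxT' _ hm).2.1
          have h4 := (hboxT' _ hm).2.2
          have := hρ₀min t (by omega) (by omega) hm
          omega
        rw [show ρ₀ - 1 + 1 = ρ₀ from by omega] at h2
        exact h2
      have hfull : ∀ s, s ≤ ρ₀ → S7.cnt n T' (a j + 1) s = S7.mcol a n (a j + 1) + 1 := by
        intro s hs
        rw [hgapT' s hs, ← hgapT' 1 hρ₀1, hprofT'' (a j + 1) (by omega), if_pos rfl]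
      have hboxE : S7.box n E := fun p hp => hboxT' p hp.1
      have hfinE : E.Finite := hfinT'.subset Set.diff_subset
      have hnestE : S7.nested n E := by
        intro e s
        by_cases hc2 : a j + 1 = e + 2
        · have hle : S7.cnt n E (e + 2) s ≤ S7.cnt n T' (e + 2) s := by
            rcases le_or_gt s ρ₀ with hs | hs
            · have h2 := keyLow s hs
              rw [hc2] at h2
              omega
            · have h2 := keyHigh s hs
              rw [hc2] at h2
              omega
          rw [keyJ (e + 1) s (by omega)]
          have := hnestT' e s
          omega
        · by_cases hc1 : a j + 1 = e + 1
          · rw [keyJ (e + 2) s (by omega)]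
            rcases le_or_gt s ρ₀ with hs | hs
            · have h4 := keyLow s hs
              rw [hc1] at h4
              have h5 := hfull s hs
              rw [hc1] at h5
              have h6 : S7.cnt n T' (e + 2) s ≤ S7.cnt n T' (e + 2) 1 := by
                by_cases hs0 : s = 0
                · subst hs0
                  have h7 : S7.cnt n T' (e + 2) 0 = S7.cnt n T' (e + 2) 1 := by
                    refine S7.cnt_gap n T' (e + 2) (by omega) (fun t ht1 ht2 hm => ?_)
                    have := (hboxT' _ hm).2.1
                    omega
                  omega
                · exact S7.cnt_mono n T' (e + 2) (by omega)
              have h7 : S7.cnt n T' (e + 2) 1 = S7.mcol a n (e + 2) := by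
                rw [hprofT'' (e + 2) (by omega), if_neg (by omega)]
                omega
              have h8 : S7.mcol a n (e + 2) ≤ S7.mcol a n (e + 1) :=
                S7.mcol_anti a n (by omega)
              omega
            · have h4 := keyHigh s hs
              rw [hc1] at h4
              rw [h4]
              exact hnestT' e s
          · rw [keyJ (e + 2) s (by omega), keyJ (e + 1) s (by omega)]
            exact hnestT' e s
      have hJ3' : ∀ k, a j + 1 - 1 = k + 1 → 1 ≤ S7.cnt n E (k + 1) ρ₀ := by
        intro k hk
        have h1 : S7.cnt n E (k + 1) ρ₀ = S7.cnt n T' (k + 1) ρ₀ := keyJ _ _ (by omega)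
        have h2 : S7.cnt n T' (k + 2) ρ₀ ≤ S7.cnt n T' (k + 1) ρ₀ := hnestT' k ρ₀
        have h3 : 1 ≤ S7.cnt n T' (k + 2) ρ₀ := by
          rw [show k + 2 = a j + 1 from by omega]
          exact S7.cnt_pos n T' hρ₀T' le_rfl hρ₀n
        omega
      have hJ4' : ∀ k, a j + 1 - 1 = k + 1 → ∀ s, ρ₀ < s →
          S7.cnt n E (k + 2) s + 1 ≤ S7.cnt n E (k + 1) ρ₀ := by
        intro k hk s hs
        have h1 : S7.cnt n E (k + 2) s = S7.cnt n T' (k + 2) s := by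
          rw [show k + 2 = a j + 1 from by omega]
          exact keyHigh s hs
        have h2 : S7.cnt n E (k + 1) ρ₀ = S7.cnt n T' (k + 1) ρ₀ := keyJ _ _ (by omega)
        have h3 : S7.cnt n T' (k + 2) ρ₀ ≤ S7.cnt n T' (k + 1) ρ₀ := hnestT' k ρ₀
        have h4 : S7.cnt n T' (k + 2) ρ₀ = 1 + S7.cnt n T' (k + 2) (ρ₀ + 1) := by
          rw [S7.cnt_split n T' (k + 2) hρ₀n,
            if_pos (show (k + 2, ρ₀) ∈ T' by
              rw [show k + 2 = a j + 1 from by omega]; exact hρ₀T')]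
        have h5 : S7.cnt n T' (k + 2) s ≤ S7.cnt n T' (k + 2) (ρ₀ + 1) :=
          S7.cnt_mono n T' (k + 2) (by omega)
        omega
      obtain ⟨D₀, r, heq, hbox₀, hnest₀, hfin₀, hr1, hrn, hsz₀, hQ4⟩ :=
        S7.rev_master n (a j + 1 - 1) E ρ₀ hboxE hnestE hfinE hρ₀1 hρ₀n hJ3' hJ4'
      have hVD₀ : S7.Valid a n D₀ := by
        refine ⟨hbox₀, hnest₀, ?_⟩
        intro k
        rw [hsz₀ (k + 1)]
        have h1 := hdel (k + 1) 1
        have h2 := hprofT'' (k + 1) (by omega)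
        by_cases hce : a j + 1 = k + 1
        · rw [if_pos ⟨hce, hρ₀1, hρ₀n⟩] at h1
          rw [if_pos hce.symm] at h2
          omega
        · rw [if_neg (fun x => hce x.1)] at h1
          rw [if_neg (fun x => hce x.symm)] at h2
          omega
      have hUmem : ({((1 : ℕ), r)} : Diagram) ∈ KD (eComp n) := by
        rw [hKDe, Set.mem_setOf_eq, S7.valid_eComp_iff hn]
        exact ⟨r, hr1, hrn, rfl⟩
      have hD₀mem : D₀ ∈ KD a := by
        rw [hKDa]
        exact hVD₀
      refine ⟨(D₀, {((1 : ℕ), r)}), Set.mem_prod.2 ⟨hD₀mem, hUmem⟩, ?_⟩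
      show S7.insCols (S7.maxCol D₀ + 1) D₀ 1 (S7.theRow {((1 : ℕ), r)}) = T'
      rw [S7.theRow_singleton r]
      have hfuelge : a j + 1 - 1 ≤ S7.maxCol D₀ + 1 := by
        by_cases haj0 : a j = 0
        · omega
        · have h1 : 1 ≤ S7.cnt n D₀ (a j) 1 := by
            rw [S7.valid_prof hVD₀ (a j) (by omega)]
            exact Finset.card_pos.2
              ⟨j, Finset.mem_filter.2 ⟨Finset.mem_Icc.2 ⟨hj1, hjn⟩, le_rfl⟩⟩
          obtain ⟨t, _, _, htD⟩ := S7.cnt_mem_of_pos n D₀ h1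
          have h2 : a j ≤ S7.maxCol D₀ := S7.le_maxCol hVD₀ htD
          omega
      obtain ⟨f, hf⟩ := Nat.le.dest hfuelge
      have h6 := hQ4 f
      rw [show (a j + 1 - 1) + 1 = a j + 1 from by omega] at h6
      have h7 : S7.insCols f E (a j + 1) ρ₀ = insert (a j + 1, ρ₀) E := by
        apply S7.ins_stop
        intro s h1 h2 hmem
        rw [hEdef] at hmem
        obtain ⟨hmem1, hmem2⟩ := hmem
        have h3 := hρ₀min s h1 (le_trans h2 hρ₀n) hmem1
        have hseq : s = ρ₀ := by omega
        exact hmem2 (by rw [hseq]; rfl)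
      have h8 : insert (a j + 1, ρ₀) E = T' := by
        rw [hEdef]
        exact S7.insert_diff_self_mem hρ₀T'
      rw [show S7.maxCol D₀ + 1 = f + (a j + 1 - 1) from by omega, h6, h7, h8]
    · -- weight
      intro T U hT hU
      obtain ⟨r, hr1, hrn, hUeq, hrow, concl⟩ := master T U hT hU
      obtain ⟨c', ρ', _, _, _, _, _, _, _, _, hrwR, _, _⟩ := concl
      funext i
      show rowWeight (S7.insCols (S7.maxCol T + 1) T 1 (S7.theRow U)) i
        = rowWeight T i + rowWeight U i
      rw [hrwR i, hUeq, S7.rw_singleton]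
      by_cases hir : i = r
      · rw [if_pos hir, if_pos (show ((1 : ℕ), r).2 = i from hir.symm)]
      · rw [if_neg hir, if_neg (show ¬((1 : ℕ), r).2 = i from fun h => hir h.symm)]
  · -- disjointness
    intro j j' hj1 hjn hjc hj'1 hj'n hj'c hne
    rw [Set.disjoint_left]
    intro T hTj hTj'
    rw [hKDb j hj1 hjn hjc, Set.mem_setOf_eq] at hTj
    rw [hKDb j' hj'1 hj'n hj'c, Set.mem_setOf_eq] at hTj'
    have hane : a j ≠ a j' := by
      rcases Ne.lt_or_gt hne with h | h
      · have h2 : a j < a (j + 1) := by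
          rcases hjc with h3 | h3
          · omega
          · exact h3
        have h3 : a (j + 1) ≤ a j' := hinc (j + 1) j' (by omega) (by omega) hj'n
        omega
      · have h2 : a j' < a (j' + 1) := by
          rcases hj'c with h3 | h3
          · omega
          · exact h3
        have h3 : a (j' + 1) ≤ a j := hinc (j' + 1) j (by omega) (by omega) hjn
        omega
    have h1 := S7.valid_prof hTj (a j + 1) (by omega)
    have h2 := S7.valid_prof hTj' (a j + 1) (by omega)
    rw [S7.mcol_bump a n j hj1 hjn _, if_pos rfl] at h1
    rw [S7.mcol_bump a n j' hj'1 hj'n _, if_neg (by omega)] at h2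
    omega
end

section
/- Let a be a weak composition of length n. For every diagram U ∈ D(a, n), there exists a unique column index c such that cwt(U) = cwt(key_a) + e_c (that is, the column weight of U equals that of key_a increased by 1 in position c). Moreover, for every weak composition b ⪯ a and every positive integer k ≤ n such that U ∈ KD(b + e_k), one has c = b_k + 1. -/
attribute [local instance] Classical.propDecidable

section Aux

lemma colWeight_move {T S : Diagram} (h : KohnertMove T S) : colWeight S = colWeight T := by
  obtain ⟨c, r, r', hin, -, -, hlt, hnotin, -, hS⟩ := h
  funext d
  unfold colWeight
  by_cases hd : d = c
  · subst hd
    have hset : {p : ℕ × ℕ | p ∈ S ∧ p.1 = d}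
        = insert (d, r') ({p : ℕ × ℕ | p ∈ T ∧ p.1 = d} \ {(d, r)}) := by
      subst hS
      ext ⟨x, y⟩
      simp only [Set.mem_setOf_eq, Set.mem_insert_iff, Set.mem_diff, Set.mem_singleton_iff,
        Prod.mk.injEq]
      constructor
      · rintro ⟨h1 | ⟨h1, h2⟩, h3⟩
        · exact Or.inl h1
        · exact Or.inr ⟨⟨h1, h3⟩, h2⟩
      · rintro (⟨rfl, rfl⟩ | ⟨⟨h1, h3⟩, h2⟩)
        · exact ⟨Or.inl ⟨rfl, rfl⟩, rfl⟩
        · exact ⟨Or.inr ⟨h1, h2⟩, h3⟩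
    rw [hset]
    exact Set.ncard_exchange (by simpa using hnotin) (by simpa using hin)
  · have hset : {p : ℕ × ℕ | p ∈ S ∧ p.1 = d} = {p : ℕ × ℕ | p ∈ T ∧ p.1 = d} := by
      subst hS
      ext ⟨x, y⟩
      simp only [Set.mem_setOf_eq, Set.mem_insert_iff, Set.mem_diff, Set.mem_singleton_iff,
        Prod.mk.injEq]
      constructor
      · rintro ⟨h1 | ⟨h1, h2⟩, h3⟩
        · exact absurd (h3.symm.trans h1.1) hd
        · exact ⟨h1, h3⟩
      · rintro ⟨h1, h3⟩
        refine ⟨Or.inr ⟨h1, ?_⟩, h3⟩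
        rintro ⟨rfl, rfl⟩
        exact hd h3.symm
    rw [hset]

lemma colWeight_KD {a : ℕ → ℕ} {T : Diagram} (h : T ∈ KD a) :
    colWeight T = colWeight (keyDiagram a) := by
  induction h with
  | refl => rfl
  | tail _ step ih => rw [colWeight_move step, ih]

lemma lswap_bound {a b : ℕ → ℕ} (h : LswapLE b a) (n : ℕ) (ha : ∀ i, n < i → a i = 0) :
    ∃ N, ∀ i, N < i → b i = 0 := by
  induction h with
  | refl => exact ⟨n, ha⟩
  | tail _ step ih =>
    obtain ⟨N, hN⟩ := ih
    obtain ⟨i, j, hi, hij, hlt, rfl⟩ := step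
    refine ⟨max N j, fun t ht => ?_⟩
    have h1 : t ≠ i := by omega
    have h2 : t ≠ j := by omega
    simp only [swapParts, h1, h2, if_false]
    exact hN t (by omega)

lemma colWeight_key_zero (a : ℕ → ℕ) : colWeight (keyDiagram a) 0 = 0 := by
  unfold colWeight
  convert Set.ncard_empty (ℕ × ℕ)
  ext ⟨x, y⟩
  simp only [Set.mem_setOf_eq, keyDiagram, Set.mem_empty_iff_false, iff_false]
  rintro ⟨⟨h1, -, -⟩, h2⟩
  omega

lemma colWeight_key (a : ℕ → ℕ) {c : ℕ} (hc : 1 ≤ c) :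
    colWeight (keyDiagram a) c = {r | 1 ≤ r ∧ c ≤ a r}.ncard := by
  unfold colWeight
  have hset : {p : ℕ × ℕ | p ∈ keyDiagram a ∧ p.1 = c}
      = (fun r => (c, r)) '' {r | 1 ≤ r ∧ c ≤ a r} := by
    ext ⟨x, y⟩
    simp only [Set.mem_setOf_eq, keyDiagram, Set.mem_image, Prod.mk.injEq]
    constructor
    · rintro ⟨⟨-, h2, h3⟩, rfl⟩
      exact ⟨y, ⟨h2, h3⟩, rfl, rfl⟩
    · rintro ⟨r, ⟨h2, h3⟩, rfl, rfl⟩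
      exact ⟨⟨hc, h2, h3⟩, rfl⟩
  rw [hset, Set.ncard_image_of_injective _ (fun x y h => by simpa using h)]

lemma colset_swap (a : ℕ → ℕ) {i j : ℕ} (hi : 1 ≤ i) (hij : i < j) (c : ℕ) :
    {r | 1 ≤ r ∧ c ≤ swapParts a i j r}.ncard = {r | 1 ≤ r ∧ c ≤ a r}.ncard := by
  have hj : 1 ≤ j := hi.trans hij.le
  have hswap : ∀ r, swapParts a i j r = a (Equiv.swap i j r) := by
    intro r
    show (if r = i then a j else if r = j then a i else a r) = a (Equiv.swap i j r)
    rcases eq_or_ne r i with rfl | h1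
    · rw [if_pos rfl, Equiv.swap_apply_left]
    · rcases eq_or_ne r j with rfl | h2
      · rw [if_neg h1, if_pos rfl, Equiv.swap_apply_right]
      · rw [if_neg h1, if_neg h2, Equiv.swap_apply_of_ne_of_ne h1 h2]
  have hpos : ∀ r, 1 ≤ r ↔ 1 ≤ Equiv.swap i j r := by
    intro r
    rcases eq_or_ne r i with rfl | h1
    · rw [Equiv.swap_apply_left]; omega
    · rcases eq_or_ne r j with rfl | h2
      · rw [Equiv.swap_apply_right]; omega
      · rw [Equiv.swap_apply_of_ne_of_ne h1 h2]
  have hset : {r | 1 ≤ r ∧ c ≤ swapParts a i j r}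
      = (Equiv.swap i j) ⁻¹' {r | 1 ≤ r ∧ c ≤ a r} := by
    ext r
    simp only [Set.mem_setOf_eq, Set.mem_preimage]
    rw [hswap r]
    constructor
    · rintro ⟨h1, h2⟩
      exact ⟨(hpos r).1 h1, h2⟩
    · rintro ⟨h1, h2⟩
      exact ⟨(hpos r).2 h1, h2⟩
  rw [hset, ← Equiv.image_symm_eq_preimage,
    Set.ncard_image_of_injective _ (Equiv.swap i j).symm.injective]

lemma colWeight_key_lswap {a b : ℕ → ℕ} (h : LswapLE b a) :
    colWeight (keyDiagram b) = colWeight (keyDiagram a) := by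
  induction h with
  | refl => rfl
  | tail _ step ih =>
    obtain ⟨i, j, hi, hij, hlt, rfl⟩ := step
    rw [← ih]
    funext c
    rcases Nat.eq_zero_or_pos c with rfl | hc
    · rw [colWeight_key_zero, colWeight_key_zero]
    · rw [colWeight_key _ hc, colWeight_key _ hc]
      exact colset_swap _ hi hij c

lemma colWeight_key_add (b : ℕ → ℕ) (N : ℕ) (hb : ∀ i, N < i → b i = 0) (k : ℕ)
    (hk : 1 ≤ k) :
    colWeight (keyDiagram (b + eComp k)) = colWeight (keyDiagram b) + eComp (b k + 1) := by
  funext c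
  show colWeight (keyDiagram (b + eComp k)) c = colWeight (keyDiagram b) c + eComp (b k + 1) c
  rcases Nat.eq_zero_or_pos c with rfl | hc
  · rw [colWeight_key_zero, colWeight_key_zero]
    simp [eComp]
  rw [colWeight_key _ hc, colWeight_key _ hc]
  by_cases hceq : c = b k + 1
  · subst hceq
    have hset : {r | 1 ≤ r ∧ b k + 1 ≤ (b + eComp k) r} = insert k {r | 1 ≤ r ∧ b k + 1 ≤ b r} := by
      ext r
      simp only [Set.mem_setOf_eq, Set.mem_insert_iff, Pi.add_apply, eComp]
      by_cases hr : r = k <;> simp [hr] <;> omega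
    have hfin : {r | 1 ≤ r ∧ b k + 1 ≤ b r}.Finite := by
      refine (Set.finite_Iic N).subset fun r hr => ?_
      simp only [Set.mem_setOf_eq] at hr
      simp only [Set.mem_Iic]
      by_contra hcon
      have := hb r (by omega)
      omega
    rw [hset, Set.ncard_insert_of_notMem (by simp) hfin]
    simp [eComp]
  · have hset : {r | 1 ≤ r ∧ c ≤ (b + eComp k) r} = {r | 1 ≤ r ∧ c ≤ b r} := by
      ext r
      simp only [Set.mem_setOf_eq, Pi.add_apply, eComp]
      by_cases hr : r = k <;> simp [hr] <;> omega
    rw [hset]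
    simp [eComp, hceq]

lemma colWeight_Dwitness {a b : ℕ → ℕ} {n j : ℕ} (ha : ∀ i, n < i → a i = 0)
    (hba : LswapLE b a) (hj : 1 ≤ j) {U : Diagram} (hUKD : U ∈ KD (b + eComp j)) :
    colWeight U = colWeight (keyDiagram a) + eComp (b j + 1) := by
  obtain ⟨N, hN⟩ := lswap_bound hba n ha
  rw [colWeight_KD hUKD, colWeight_key_add b N hN j hj, colWeight_key_lswap hba]

lemma eComp_eq_of_add {w : ℕ → ℕ} {c c' : ℕ} (h : w + eComp c = w + eComp c') : c = c' := by
  have h1 : eComp c = eComp c' := by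
    funext i
    have := congrFun h i
    simp only [Pi.add_apply] at this
    omega
  have h2 := congrFun h1 c
  simp only [eComp] at h2
  by_contra hne
  simp [hne] at h2

end Aux

/-- Every diagram of `D(a,n)` has a unique added column, which
is `b_k + 1` for any witnessing `b ⪯ a` and `k ≤ n`. -/
theorem statement11 (n : ℕ) (a : ℕ → ℕ) (ha : ∀ i, n < i → a i = 0)
    (U : Diagram) (hU : U ∈ Dset a n) :
    (∃! c : ℕ, colWeight U = colWeight (keyDiagram a) + eComp c) ∧
    ∀ c : ℕ, colWeight U = colWeight (keyDiagram a) + eComp c →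
      ∀ (b : ℕ → ℕ) (k : ℕ), LswapLE b a → 1 ≤ k → k ≤ n →
        U ∈ KD (b + eComp k) → c = b k + 1 := by
  obtain ⟨b, j, hba, hj1, hjn, hUKD⟩ := hU
  have hwU : colWeight U = colWeight (keyDiagram a) + eComp (b j + 1) :=
    colWeight_Dwitness ha hba hj1 hUKD
  constructor
  · refine ⟨b j + 1, hwU, fun c hc => ?_⟩
    exact eComp_eq_of_add (hc.symm.trans hwU)
  · intro c hc b' k hb'a hk1 hkn hUk
    have hwU' : colWeight U = colWeight (keyDiagram a) + eComp (b' k + 1) :=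
      colWeight_Dwitness ha hb'a hk1 hUk
    exact eComp_eq_of_add (hc.symm.trans hwU')
end

section
/- Let λ be a partition of length at most n, let T ∈ SSYT_n(λ), and let 1 ≤ j ≤ n. Then 𝔻(RSK(T, j)) = rectify(𝔻(T) ∪ {(λ_1 + 1, n + 1 − j)}). -/
attribute [local instance] Classical.propDecidable

namespace S14

/-- Bundled context: `g` is an SSYT of shape `μ` with entries `≤ n`. -/
structure Ctx (n : ℕ) (μ : ℕ → ℕ) (g : ℕ → ℕ → ℕ) : Prop where
  mono : ∀ i, 1 ≤ i → μ (i+1) ≤ μ i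
  zero : ∀ i, n < i → μ i = 0
  ssyt : IsSSYT n μ g

namespace Ctx

variable {n : ℕ} {μ : ℕ → ℕ} {g : ℕ → ℕ → ℕ}

lemma shape_iff (h : Ctx n μ g) (i c : ℕ) : g i c ≠ 0 ↔ (1 ≤ i ∧ 1 ≤ c ∧ c ≤ μ i) :=
  h.ssyt.1 i c

lemma le_n (h : Ctx n μ g) (i c : ℕ) : g i c ≤ n := h.ssyt.2.1 i c

lemma rowmono' (h : Ctx n μ g) : ∀ i c, 1 ≤ i → 1 ≤ c → c + 1 ≤ μ i → g i c ≤ g i (c+1) :=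
  h.ssyt.2.2.1

lemma colstrict' (h : Ctx n μ g) : ∀ i c, 1 ≤ i → 1 ≤ c → c ≤ μ (i+1) → g i c < g (i+1) c :=
  h.ssyt.2.2.2

lemma mu_anti (h : Ctx n μ g) : ∀ i i', 1 ≤ i → i ≤ i' → μ i' ≤ μ i := by
  intro i i' h1 hle
  induction i' with
  | zero => omega
  | succ k ih =>
    rcases Nat.lt_or_ge i (k+1) with hlt | hge
    · exact le_trans (h.mono k (by omega)) (ih (by omega))
    · have hik : i = k + 1 := by omega
      rw [hik]

lemma row_le_n (h : Ctx n μ g) {i c : ℕ} (hne : g i c ≠ 0) : 1 ≤ i ∧ i ≤ n := by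
  have hs := (h.shape_iff i c).mp hne
  refine ⟨hs.1, ?_⟩
  by_contra hc
  have := h.zero i (by omega)
  omega

/-- Entries strictly increase down columns (within shape). -/
lemma col_strict (h : Ctx n μ g) : ∀ i i' c, 1 ≤ i → i < i' → g i' c ≠ 0 → g i c < g i' c := by
  intro i i' c h1 hlt hne
  induction i' with
  | zero => omega
  | succ k ih =>
    have hs := (h.shape_iff (k+1) c).mp hne
    rcases Nat.lt_or_ge i k with hik | hik
    · have hkc : g k c ≠ 0 := by
        rw [h.shape_iff]
        exact ⟨by omega, hs.2.1, le_trans hs.2.2 (h.mono k (by omega))⟩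
      have h2 : g k c < g (k+1) c := h.colstrict' k c (by omega) hs.2.1 hs.2.2
      exact lt_trans (ih hik hkc) h2
    · have : i = k := by omega
      subst this
      exact h.colstrict' i c h1 hs.2.1 hs.2.2

/-- Entries weakly increase along rows (within shape). -/
lemma row_mono (h : Ctx n μ g) : ∀ i c c', 1 ≤ c → c ≤ c' → g i c' ≠ 0 → g i c ≤ g i c' := by
  intro i c c' hc hle hne
  induction c' with
  | zero => omega
  | succ k ih =>
    have hs := (h.shape_iff i (k+1)).mp hne
    rcases Nat.lt_or_ge c (k+1) with _ | _
    · have hkc : g i k ≠ 0 := by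
        rw [h.shape_iff]
        exact ⟨hs.1, by omega, by omega⟩
      have h2 : g i k ≤ g i (k+1) := h.rowmono' i k hs.1 (by omega) hs.2.2
      exact le_trans (ih (by omega) hkc) h2
    · have : c = k + 1 := by omega
      rw [this]

end Ctx

/-- Index set of rows whose column-`c` entry is nonzero and `≤ w`. -/
def idxSet (g : ℕ → ℕ → ℕ) (c w : ℕ) : Set ℕ := {i | 1 ≤ i ∧ g i c ≠ 0 ∧ g i c ≤ w}

lemma idxSet_mem {g : ℕ → ℕ → ℕ} {c w i : ℕ} :
    i ∈ idxSet g c w ↔ 1 ≤ i ∧ g i c ≠ 0 ∧ g i c ≤ w := Iff.rfl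

noncomputable def Ncount (g : ℕ → ℕ → ℕ) (c w : ℕ) : ℕ := (idxSet g c w).ncard

/-- The cells of `T` in column `c` at rows `≥ r`. -/
def colSet (T : Diagram) (c r : ℕ) : Set (ℕ × ℕ) := {p | p ∈ T ∧ p.1 = c ∧ r ≤ p.2}

lemma colSet_mem {T : Diagram} {c r : ℕ} {p : ℕ × ℕ} :
    p ∈ colSet T c r ↔ p ∈ T ∧ p.1 = c ∧ r ≤ p.2 := Iff.rfl

lemma mval_eq (T : Diagram) (c r : ℕ) :
    mval T c r = ((colSet T (c-1) r).ncard : ℤ) - (colSet T c r).ncard := rfl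

lemma toDiagram_mem {n : ℕ} {g : ℕ → ℕ → ℕ} {p : ℕ × ℕ} :
    p ∈ toDiagram n g ↔ ∃ i, 1 ≤ i ∧ g i p.1 ≠ 0 ∧ p.2 + g i p.1 = n + 1 := Iff.rfl

variable {n : ℕ} {μ : ℕ → ℕ} {g : ℕ → ℕ → ℕ}

lemma idxSet_finite (h : Ctx n μ g) (c w : ℕ) : (idxSet g c w).Finite := by
  apply Set.Finite.subset (Set.finite_Icc 1 n)
  intro i hi
  exact Set.mem_Icc.mpr (h.row_le_n hi.2.1)

lemma colSet_toDiagram (h : Ctx n μ g) (c r : ℕ) :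
    colSet (toDiagram n g) c r
      = (fun i => ((c, n + 1 - g i c) : ℕ × ℕ)) '' idxSet g c (n + 1 - r) := by
  ext ⟨pc, pr⟩
  simp only [colSet_mem, toDiagram_mem, Set.mem_image, idxSet_mem, Prod.mk.injEq]
  constructor
  · rintro ⟨⟨i, hi1, hine, hisum⟩, hpc, hpr⟩
    subst hpc
    have hle := h.le_n i pc
    exact ⟨i, ⟨hi1, hine, by omega⟩, rfl, by omega⟩
  · rintro ⟨i, ⟨hi1, hine, hile⟩, hpc, hpr⟩
    subst hpc
    have hle := h.le_n i c
    have hge1 : 1 ≤ g i c := Nat.one_le_iff_ne_zero.mpr hine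
    exact ⟨⟨i, hi1, hine, by omega⟩, rfl, by omega⟩

lemma colSet_ncard (h : Ctx n μ g) (c r : ℕ) :
    (colSet (toDiagram n g) c r).ncard = Ncount g c (n + 1 - r) := by
  rw [colSet_toDiagram h]
  apply Set.ncard_image_of_injOn
  intro i1 hi1 i2 hi2 heq
  simp only [Prod.mk.injEq] at heq
  have hle1 := h.le_n i1 c
  have hle2 := h.le_n i2 c
  have hg1 : g i1 c ≠ 0 := hi1.2.1
  have hg2 : g i2 c ≠ 0 := hi2.2.1
  have hval : g i1 c = g i2 c := by omega
  by_contra hne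
  rcases Nat.lt_or_ge i1 i2 with hlt | hge
  · have := h.col_strict i1 i2 c hi1.1 hlt hi2.2.1; omega
  · have := h.col_strict i2 i1 c hi2.1 (by omega) hi1.2.1; omega

lemma colSet_toDiagram_finite (h : Ctx n μ g) (c r : ℕ) :
    (colSet (toDiagram n g) c r).Finite := by
  rw [colSet_toDiagram h]
  exact Set.Finite.image _ (idxSet_finite h c _)

lemma Ncount_anti (h : Ctx n μ g) {c : ℕ} (hc : 1 ≤ c) (w : ℕ) :
    Ncount g (c+1) w ≤ Ncount g c w := by
  apply Set.ncard_le_ncard _ (idxSet_finite h c w)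
  intro i hi
  obtain ⟨h1, h2, h3⟩ := hi
  have hs := (h.shape_iff i (c+1)).mp h2
  have hne : g i c ≠ 0 := by rw [h.shape_iff]; exact ⟨hs.1, hc, by omega⟩
  exact ⟨h1, hne, le_trans (h.row_mono i c (c+1) hc (by omega) h2) h3⟩

lemma mval_toDiagram (h : Ctx n μ g) (c r : ℕ) :
    mval (toDiagram n g) c r
      = (Ncount g (c-1) (n+1-r) : ℤ) - Ncount g c (n+1-r) := by
  rw [mval_eq, colSet_ncard h, colSet_ncard h]

lemma mval_toDiagram_nonneg (h : Ctx n μ g) {c : ℕ} (hc : 1 < c) (r : ℕ) :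
    0 ≤ mval (toDiagram n g) c r := by
  rw [mval_toDiagram h]
  have h2 : Ncount g (c-1+1) (n+1-r) ≤ Ncount g (c-1) (n+1-r) :=
    Ncount_anti h (by omega) (n+1-r)
  have hcc : c - 1 + 1 = c := by omega
  rw [hcc] at h2
  omega

lemma rho_eq_self_of (T : Diagram) (H : ∀ c r, 1 < c → 1 ≤ r → 0 ≤ mval T c r) :
    rho T = T := by
  unfold rho
  rw [if_pos H]

end S14
namespace S14

variable {n : ℕ} {μ : ℕ → ℕ} {g : ℕ → ℕ → ℕ}

lemma bump_nonempty (h : Ctx n μ g) (i x : ℕ) :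
    {c | 1 ≤ c ∧ (g i c = 0 ∨ x < g i c)}.Nonempty := by
  refine ⟨μ i + 1, by omega, Or.inl ?_⟩
  by_contra hne
  have := (h.shape_iff i (μ i + 1)).mp hne
  omega

lemma bump_mem (h : Ctx n μ g) (i x : ℕ) :
    1 ≤ bumpCol g i x ∧ (g i (bumpCol g i x) = 0 ∨ x < g i (bumpCol g i x)) :=
  Nat.sInf_mem (bump_nonempty h i x)

lemma bump_le (i x c : ℕ) (h1 : 1 ≤ c) (h2 : g i c = 0 ∨ x < g i c) :
    bumpCol g i x ≤ c :=
  Nat.sInf_le ⟨h1, h2⟩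

lemma bump_lt {i x c : ℕ} (h1 : 1 ≤ c) (h2 : c < bumpCol g i x) :
    g i c ≠ 0 ∧ g i c ≤ x := by
  by_contra hcon
  have hmem : c ∈ {c | 1 ≤ c ∧ (g i c = 0 ∨ x < g i c)} := by
    refine ⟨h1, ?_⟩
    by_contra hh
    push_neg at hh
    exact hcon ⟨hh.1, by omega⟩
  have := Nat.sInf_le hmem
  unfold bumpCol at h2
  omega

/-- In row `i`, every entry from column `bumpCol g i x` rightwards is `0` or `> x`. -/
lemma row_ge_bump (h : Ctx n μ g) {i x c : ℕ} (hbc : bumpCol g i x ≤ c) :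
    g i c = 0 ∨ x < g i c := by
  rcases bump_mem h i x with ⟨hb1, hb2⟩
  by_cases hzero : g i c = 0
  · exact Or.inl hzero
  · right
    rcases hb2 with hb0 | hbx
    · -- g i b = 0 : then column c ≥ b is outside the shape, contradiction
      exfalso
      have hs := (h.shape_iff i c).mp hzero
      have hne : g i (bumpCol g i x) ≠ 0 := by
        rw [h.shape_iff]
        exact ⟨hs.1, hb1, by omega⟩
      exact hne hb0
    · have := h.row_mono i (bumpCol g i x) c hb1 hbc hzero
      omega

/-- The insertion context: `g` SSYT of shape `μ`, pending entry `x` to be inserted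
into tableau row `i`, floating diagram cell in column `d`. -/
structure Ins (n : ℕ) (μ : ℕ → ℕ) (g : ℕ → ℕ → ℕ) (i x d : ℕ) extends Ctx n μ g : Prop where
  hi : 1 ≤ i
  hx1 : 1 ≤ x
  hxn : x ≤ n
  hd : 1 ≤ d
  hbd : bumpCol g i x ≤ d
  hshape : 2 ≤ i → d ≤ μ (i-1)
  habove : ∀ i' c, 1 ≤ i' → i' < i → 1 ≤ c → c ≤ d → g i' c ≠ 0 → g i' c < x

namespace Ins

variable {i x d : ℕ}

/-- There is no cell `(c, n+1-x)` of `toDiagram n g` for `bumpCol ≤ c ≤ d`: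
no entry of column `c` equals `x`. -/
lemma not_mem (hI : Ins n μ g i x d) {c : ℕ} (hbc : bumpCol g i x ≤ c) (hcd : c ≤ d) :
    ((c, n + 1 - x) : ℕ × ℕ) ∉ toDiagram n g := by
  have h := hI.toCtx
  rintro ⟨i', hi'1, hine, hisum⟩
  simp only at hine hisum
  have hle := h.le_n i' c
  have hb1 := (bump_mem h i x).1
  have hval : g i' c = x := by omega
  rcases lt_trichotomy i' i with hlt | heq | hgt
  · have := hI.habove i' c hi'1 hlt (by omega) hcd hine
    omega
  · subst heq
    have := row_ge_bump h hbc
    omega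
  · have hic : g i c ≠ 0 := by
      rw [h.shape_iff]
      have hs := (h.shape_iff i' c).mp hine
      exact ⟨hI.hi, hs.2.1, le_trans hs.2.2 (h.mu_anti i i' hI.hi (by omega))⟩
    have h1 := h.col_strict i i' c hI.hi hgt hine
    have h2 := row_ge_bump h (c := c) hbc
    omega

/-- Key inequality in the moving case: when `bumpCol < d`,
column `d-1` has at most as many entries `≤ x` as column `d`. -/
lemma key_move (hI : Ins n μ g i x d) (hlt : bumpCol g i x < d) :
    Ncount g (d-1) x ≤ Ncount g d x := by
  have h := hI.toCtx
  apply Set.ncard_le_ncard _ (idxSet_finite h d x)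
  intro i' hi'
  obtain ⟨h1, h2, h3⟩ := hi'
  have hd2 : 2 ≤ d := by
    have := (bump_mem h i x).1
    omega
  -- first: i' < i
  have hi'lt : i' < i := by
    rcases lt_trichotomy i' i with hlt' | heq | hgt
    · exact hlt'
    · exfalso
      have hrb := row_ge_bump h (i := i) (x := x) (c := d - 1) (by omega)
      rw [← heq] at hrb
      omega
    · exfalso
      have hic : g i (d-1) ≠ 0 := by
        rw [h.shape_iff]
        have hs := (h.shape_iff i' (d-1)).mp h2
        exact ⟨hI.hi, hs.2.1, le_trans hs.2.2 (h.mu_anti i i' hI.hi (by omega))⟩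
      have hcs := h.col_strict i i' (d-1) hI.hi hgt h2
      have := row_ge_bump h (i := i) (x := x) (c := d - 1) (by omega)
      omega
  -- then row i' has an entry in column d, smaller than x
  have hi2 : 2 ≤ i := by omega
  have hdmu : d ≤ μ i' :=
    le_trans (hI.hshape hi2) (h.mu_anti i' (i-1) h1 (by omega))
  have hne : g i' d ≠ 0 := by
    rw [h.shape_iff]
    exact ⟨h1, by omega, hdmu⟩
  have := hI.habove i' d h1 hi'lt (by omega) le_rfl hne
  exact ⟨h1, hne, by omega⟩

/-- Key inequality in the stopping case: when `bumpCol = d` and `g i d = 0`,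
column `d-1` has strictly more entries `≤ w` than column `d`, for every `w ≥ x`. -/
lemma key_stop (hI : Ins n μ g i x d) (hb : bumpCol g i x = d) (hy : g i d = 0)
    (hd2 : 2 ≤ d) {w : ℕ} (hw : x ≤ w) :
    Ncount g d w + 1 ≤ Ncount g (d-1) w := by
  have h := hI.toCtx
  have hbl := bump_lt (g := g) (i := i) (x := x) (c := d-1) (by omega) (by omega)
  have hinotmem : i ∉ idxSet g d w := fun hmem => hmem.2.1 hy
  have hsub : insert i (idxSet g d w) ⊆ idxSet g (d-1) w := by
    rintro i' (rfl | hi')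
    · exact ⟨hI.hi, hbl.1, by omega⟩
    · obtain ⟨h1, h2, h3⟩ := hi'
      have hs := (h.shape_iff i' d).mp h2
      have hi'lt : i' < i := by
        rcases lt_trichotomy i' i with hlt' | heq | hgt
        · exact hlt'
        · exfalso; subst heq; exact h2 hy
        · exfalso
          have : μ i' ≤ μ i := h.mu_anti i i' hI.hi (by omega)
          have : g i d ≠ 0 := by rw [h.shape_iff]; exact ⟨hI.hi, by omega, by omega⟩
          exact this hy
      have hne : g i' (d-1) ≠ 0 := by
        rw [h.shape_iff]
        exact ⟨h1, by omega, by omega⟩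
      exact ⟨h1, hne, le_trans (h.row_mono i' (d-1) d (by omega) (by omega) h2) h3⟩
  have hfin := idxSet_finite h (d-1) w
  have h1 := Set.ncard_insert_of_notMem hinotmem (idxSet_finite h d w)
  have h2 := Set.ncard_le_ncard hsub hfin
  unfold Ncount
  omega

end Ins

end S14
namespace S14

/-- The intermediate state: diagram of `g` plus a floating cell `(d, n+1-x)`. -/
def stT (n : ℕ) (g : ℕ → ℕ → ℕ) (x d : ℕ) : Diagram :=
  insert ((d, n + 1 - x) : ℕ × ℕ) (toDiagram n g)

variable {n : ℕ} {μ : ℕ → ℕ} {g : ℕ → ℕ → ℕ}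

lemma colSet_insert_pos (T₀ : Diagram) {q : ℕ × ℕ} {c r : ℕ} (h1 : q.1 = c) (h2 : r ≤ q.2) :
    colSet (insert q T₀) c r = insert q (colSet T₀ c r) := by
  ext p
  simp only [colSet_mem, Set.mem_insert_iff]
  constructor
  · rintro ⟨hpq | hp, hc, hr⟩
    · exact Or.inl hpq
    · exact Or.inr ⟨hp, hc, hr⟩
  · rintro (rfl | ⟨hp, hc, hr⟩)
    · exact ⟨Or.inl rfl, h1, h2⟩
    · exact ⟨Or.inr hp, hc, hr⟩

lemma colSet_insert_neg (T₀ : Diagram) {q : ℕ × ℕ} {c r : ℕ} (h0 : ¬(q.1 = c ∧ r ≤ q.2)) :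
    colSet (insert q T₀) c r = colSet T₀ c r := by
  ext p
  simp only [colSet_mem, Set.mem_insert_iff]
  constructor
  · rintro ⟨hpq | hp, hc, hr⟩
    · subst hpq; exact absurd ⟨hc, hr⟩ h0
    · exact ⟨hp, hc, hr⟩
  · rintro ⟨hp, hc, hr⟩
    exact ⟨Or.inr hp, hc, hr⟩

lemma mval_st_other (h : Ctx n μ g) {x d c : ℕ} (hd : 1 ≤ d) (hc1 : c ≠ d) (hc2 : c ≠ d + 1)
    (r : ℕ) : mval (stT n g x d) c r = mval (toDiagram n g) c r := by
  have e1 : colSet (stT n g x d) c r = colSet (toDiagram n g) c r :=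
    colSet_insert_neg _ (by simp only; omega)
  have e2 : colSet (stT n g x d) (c-1) r = colSet (toDiagram n g) (c-1) r :=
    colSet_insert_neg _ (by simp only; omega)
  rw [mval_eq, mval_eq, e1, e2]

lemma mval_st_dp1 (h : Ctx n μ g) {x d : ℕ} (r : ℕ) :
    mval (toDiagram n g) (d+1) r ≤ mval (stT n g x d) (d+1) r := by
  have e1 : colSet (stT n g x d) (d+1) r = colSet (toDiagram n g) (d+1) r :=
    colSet_insert_neg _ (by simp only; omega)
  have hfin : (colSet (stT n g x d) (d+1-1) r).Finite := by
    apply Set.Finite.subset ((colSet_toDiagram_finite h (d+1-1) r).insert ((d, n+1-x) : ℕ × ℕ))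
    rintro p ⟨hpq | hp, hc, hr⟩
    · exact Or.inl hpq
    · exact Or.inr ⟨hp, hc, hr⟩
  have hsub : colSet (toDiagram n g) (d+1-1) r ⊆ colSet (stT n g x d) (d+1-1) r := by
    rintro p ⟨hp, hc, hr⟩
    exact ⟨Or.inr hp, hc, hr⟩
  have := Set.ncard_le_ncard hsub hfin
  rw [mval_eq, mval_eq, e1]
  omega

lemma mval_st_d (hI : Ins n μ g i x d) (r : ℕ) :
    mval (stT n g x d) d r
      = mval (toDiagram n g) d r - (if r ≤ n + 1 - x then 1 else 0) := by
  have h := hI.toCtx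
  have e2 : colSet (stT n g x d) (d-1) r = colSet (toDiagram n g) (d-1) r :=
    colSet_insert_neg _ (by simp only; have := hI.hd; omega)
  by_cases hr : r ≤ n + 1 - x
  · have e1 : colSet (stT n g x d) d r = insert ((d, n+1-x) : ℕ × ℕ) (colSet (toDiagram n g) d r) :=
      colSet_insert_pos _ rfl hr
    have hnm : ((d, n+1-x) : ℕ × ℕ) ∉ colSet (toDiagram n g) d r := by
      rintro ⟨hp, -, -⟩
      exact hI.not_mem hI.hbd le_rfl hp
    rw [mval_eq, mval_eq, e1, e2, if_pos hr,
      Set.ncard_insert_of_notMem hnm (colSet_toDiagram_finite h d r)]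
    push_cast
    ring
  · have e1 : colSet (stT n g x d) d r = colSet (toDiagram n g) d r :=
      colSet_insert_neg _ (by simp only; omega)
    rw [mval_eq, mval_eq, e1, e2, if_neg hr]
    ring

lemma rho_move (hI : Ins n μ g i x d) (hlt : bumpCol g i x < d) :
    rho (stT n g x d) = stT n g x (d-1) := by
  have h := hI.toCtx
  have hb1 := (bump_mem h i x).1
  have hd2 : 2 ≤ d := by omega
  have hxx : n + 1 - (n + 1 - x) = x := by have := hI.hxn; have := hI.hx1; omega
  have hr0 : 1 ≤ n + 1 - x := by have := hI.hxn; omega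
  -- m_g(d, n+1-x) = 0
  have hmz : mval (toDiagram n g) d (n + 1 - x) = 0 := by
    rw [mval_toDiagram h, hxx]
    have h1 := hI.key_move hlt
    have h2 : Ncount g (d-1+1) x ≤ Ncount g (d-1) x := Ncount_anti h (by omega) x
    rw [show d - 1 + 1 = d by omega] at h2
    omega
  have hTd := mval_st_d hI
  have hneg : mval (stT n g x d) d (n + 1 - x) < 0 := by
    rw [hTd, hmz, if_pos le_rfl]
    norm_num
  have hnotall : ¬ ∀ c r, 1 < c → 1 ≤ r → 0 ≤ mval (stT n g x d) c r := by
    intro H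
    have := H d (n + 1 - x) (by omega) hr0
    omega
  have hother : ∀ c r, 1 < c → c ≠ d → 0 ≤ mval (stT n g x d) c r := by
    intro c r hc1 hcd
    by_cases hcd1 : c = d + 1
    · subst hcd1
      exact le_trans (mval_toDiagram_nonneg h hc1 r) (mval_st_dp1 h r)
    · rw [mval_st_other h hI.hd hcd hcd1 r]
      exact mval_toDiagram_nonneg h hc1 r
  have hsinf : sInf {c | 1 < c ∧ ∃ r, 1 ≤ r ∧ mval (stT n g x d) c r < 0} = d := by
    have hdmem : d ∈ {c | 1 < c ∧ ∃ r, 1 ≤ r ∧ mval (stT n g x d) c r < 0} :=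
      ⟨by omega, n + 1 - x, hr0, hneg⟩
    apply le_antisymm
    · exact Nat.sInf_le hdmem
    · apply le_csInf ⟨d, hdmem⟩
      intro c hc
      obtain ⟨hc1, r, hr1, hrneg⟩ := hc
      by_contra hcon
      push_neg at hcon
      have := hother c r hc1 (by omega)
      omega
  have hmin : ∀ r', 1 ≤ r' → mval (stT n g x d) d (n + 1 - x) ≤ mval (stT n g x d) d r' := by
    intro r' _
    rw [hTd, hTd, hmz, if_pos le_rfl]
    have h0 := mval_toDiagram_nonneg h (show 1 < d by omega) r'
    by_cases hrr : r' ≤ n + 1 - x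
    · rw [if_pos hrr]; omega
    · rw [if_neg hrr]; omega
  have hub : ∀ r ∈ {r | 1 ≤ r ∧ ∀ r', 1 ≤ r' →
      mval (stT n g x d) d r ≤ mval (stT n g x d) d r'}, r ≤ n + 1 - x := by
    intro r hr
    by_contra hgt
    push_neg at hgt
    have h1 := hr.2 (n + 1 - x) hr0
    have h2 := hTd r
    rw [if_neg (by omega)] at h2
    have h3 := mval_toDiagram_nonneg h (show 1 < d by omega) r
    rw [hTd (n+1-x), hmz, if_pos le_rfl] at h1
    omega
  have hssup : sSup {r | 1 ≤ r ∧ ∀ r', 1 ≤ r' →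
      mval (stT n g x d) d r ≤ mval (stT n g x d) d r'} = n + 1 - x := by
    have hmem : (n + 1 - x) ∈ {r | 1 ≤ r ∧ ∀ r', 1 ≤ r' →
        mval (stT n g x d) d r ≤ mval (stT n g x d) d r'} := ⟨hr0, hmin⟩
    apply le_antisymm
    · exact csSup_le ⟨n + 1 - x, hmem⟩ hub
    · exact le_csSup ⟨n + 1 - x, hub⟩ hmem
  have hq : ((d, n + 1 - x) : ℕ × ℕ) ∉ toDiagram n g := hI.not_mem hI.hbd le_rfl
  unfold rho
  rw [if_neg hnotall]
  simp only [hsinf, hssup]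
  show insert (d - 1, n + 1 - x) (stT n g x d \ {(d, n + 1 - x)}) = stT n g x (d-1)
  unfold stT
  rw [Set.insert_diff_self_of_notMem hq]

lemma rho_stop (hI : Ins n μ g i x d) (hb : bumpCol g i x = d) (hy : g i d = 0) :
    rho (stT n g x d) = stT n g x d := by
  have h := hI.toCtx
  apply rho_eq_self_of
  intro c r hc hr
  by_cases hcd : c = d
  · subst hcd
    by_cases hrr : r ≤ n + 1 - x
    · rw [mval_st_d hI, mval_toDiagram h, if_pos hrr]
      have hxw : x ≤ n + 1 - r := by have := hI.hxn; omega
      have := hI.key_stop hb hy (by omega) hxw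
      omega
    · rw [mval_st_d hI, if_neg hrr]
      have := mval_toDiagram_nonneg h hc r
      omega
  · by_cases hcd1 : c = d + 1
    · subst hcd1
      exact le_trans (mval_toDiagram_nonneg h hc r) (mval_st_dp1 h r)
    · rw [mval_st_other h hI.hd hcd hcd1 r]
      exact mval_toDiagram_nonneg h hc r

end S14
namespace S14

variable {n : ℕ} {μ : ℕ → ℕ} {g : ℕ → ℕ → ℕ} {i x d : ℕ}

/-- In the stopping case, the state is the diagram of the updated tableau. -/
lemma stT_update (hI : Ins n μ g i x d) (hy : g i d = 0) :
    stT n g x d = toDiagram n (fun i' c' => if i' = i ∧ c' = d then x else g i' c') := by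
  have hx1 := hI.hx1
  have hxn := hI.hxn
  ext ⟨pc, pr⟩
  simp only [stT, Set.mem_insert_iff, toDiagram_mem, Prod.mk.injEq]
  constructor
  · rintro (⟨hpc, hpr⟩ | ⟨i₀, h1, h2, h3⟩)
    · refine ⟨i, hI.hi, ?_, ?_⟩
      · rw [if_pos ⟨rfl, hpc⟩]; omega
      · rw [if_pos ⟨rfl, hpc⟩]; omega
    · by_cases hcase : i₀ = i ∧ pc = d
      · exfalso; rw [hcase.1, hcase.2] at h2; exact h2 hy
      · exact ⟨i₀, h1, by rw [if_neg hcase]; exact h2, by rw [if_neg hcase]; exact h3⟩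
  · rintro ⟨i₀, h1, h2, h3⟩
    by_cases hcase : i₀ = i ∧ pc = d
    · rw [if_pos hcase] at h3
      exact Or.inl ⟨hcase.2, by omega⟩
    · rw [if_neg hcase] at h2 h3
      exact Or.inr ⟨i₀, h1, h2, h3⟩

/-- In the bumping case, the state re-describes itself over the updated tableau. -/
lemma stT_bump (hI : Ins n μ g i x d) (hy : g i d ≠ 0) :
    stT n g x d
      = stT n (fun i' c' => if i' = i ∧ c' = d then x else g i' c') (g i d) d := by
  have h := hI.toCtx
  have hyn := h.le_n i d
  have hxn := hI.hxn
  have hx1 := hI.hx1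
  have hy1 : 1 ≤ g i d := Nat.one_le_iff_ne_zero.mpr hy
  ext ⟨pc, pr⟩
  simp only [stT, Set.mem_insert_iff, toDiagram_mem, Prod.mk.injEq]
  constructor
  · rintro (⟨hpc, hpr⟩ | ⟨i₀, h1, h2, h3⟩)
    · refine Or.inr ⟨i, hI.hi, ?_, ?_⟩
      · rw [if_pos ⟨rfl, hpc⟩]; omega
      · rw [if_pos ⟨rfl, hpc⟩]; omega
    · by_cases hcase : i₀ = i ∧ pc = d
      · left
        rw [hcase.1, hcase.2] at h3
        exact ⟨hcase.2, by omega⟩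
      · exact Or.inr ⟨i₀, h1, by rw [if_neg hcase]; exact h2, by rw [if_neg hcase]; exact h3⟩
  · rintro (⟨hpc, hpr⟩ | ⟨i₀, h1, h2, h3⟩)
    · refine Or.inr ⟨i, hI.hi, ?_, ?_⟩
      · rw [hpc]; exact hy
      · rw [hpc]; omega
    · by_cases hcase : i₀ = i ∧ pc = d
      · rw [if_pos hcase] at h3
        exact Or.inl ⟨hcase.2, by omega⟩
      · rw [if_neg hcase] at h2 h3
        exact Or.inr ⟨i₀, h1, h2, h3⟩

/-- In the bumping case, the updated tableau with the bumped entry pending in the next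
row is again a valid insertion state (in the same column `d`). -/
lemma ins_bump (hI : Ins n μ g i x d) (hb : bumpCol g i x = d) (hy : g i d ≠ 0) :
    Ins n μ (fun i' c' => if i' = i ∧ c' = d then x else g i' c') (i+1) (g i d) d
      ∧ x < g i d := by
  have h := hI.toCtx
  have hxy : x < g i d := by
    have := (bump_mem h i x).2
    rw [hb] at this
    rcases this with h0 | h0
    · exact absurd h0 hy
    · exact h0
  have hshape_y := (h.shape_iff i d).mp hy
  set g' : ℕ → ℕ → ℕ := fun i' c' => if i' = i ∧ c' = d then x else g i' c' with hg'
  have hssyt : IsSSYT n μ g' := by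
    refine ⟨?_, ?_, ?_, ?_⟩
    · intro i' c'
      by_cases hcase : i' = i ∧ c' = d
      · obtain ⟨rfl, rfl⟩ := hcase
        simp only [hg', if_pos (⟨rfl, rfl⟩ : i' = i' ∧ c' = c')]
        constructor
        · intro _; exact hshape_y
        · intro _; have := hI.hx1; omega
      · simp only [hg', if_neg hcase]
        exact h.shape_iff i' c'
    · intro i' c'
      by_cases hcase : i' = i ∧ c' = d
      · simp only [hg', if_pos hcase]; exact hI.hxn
      · simp only [hg', if_neg hcase]; exact h.le_n i' c'
    · -- rows weakly increase
      intro i' c h1 hc hcμ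
      by_cases hii : i' = i
      · subst hii
        by_cases hcd : c = d
        · subst hcd
          simp only [hg', if_pos (⟨rfl, rfl⟩ : i' = i' ∧ c = c),
            if_neg (show ¬(i' = i' ∧ c + 1 = c) by omega)]
          have := h.rowmono' i' c h1 hc hcμ
          omega
        · by_cases hcd1 : c + 1 = d
          · simp only [hg', if_neg (show ¬(i' = i' ∧ c = d) by omega),
              if_pos (⟨rfl, hcd1⟩ : i' = i' ∧ c + 1 = d)]
            have := bump_lt (g := g) (i := i') (x := x) (c := c) hc (by omega)
            omega
          · simp only [hg', if_neg (show ¬(i' = i' ∧ c = d) by omega),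
              if_neg (show ¬(i' = i' ∧ c + 1 = d) by omega)]
            exact h.rowmono' i' c h1 hc hcμ
      · simp only [hg', if_neg (show ¬(i' = i ∧ c = d) by omega),
          if_neg (show ¬(i' = i ∧ c + 1 = d) by omega)]
        exact h.rowmono' i' c h1 hc hcμ
    · -- columns strictly increase
      intro i' c h1 hc hcμ
      by_cases hA : i' = i ∧ c = d
      · obtain ⟨rfl, rfl⟩ := hA
        simp only [hg', if_pos (⟨rfl, rfl⟩ : i' = i' ∧ c = c),
          if_neg (show ¬(i' + 1 = i' ∧ c = c) by omega)]
        have := h.colstrict' i' c h1 hc hcμ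
        omega
      · by_cases hB : i' + 1 = i ∧ c = d
        · obtain ⟨hB1, rfl⟩ := hB
          simp only [hg', if_neg hA, if_pos (⟨hB1, rfl⟩ : i' + 1 = i ∧ c = c)]
          have hne : g i' c ≠ 0 := by
            rw [h.shape_iff]
            refine ⟨h1, hc, ?_⟩
            calc c ≤ μ (i' + 1) := hcμ
              _ ≤ μ i' := h.mono i' h1
          exact hI.habove i' c h1 (by omega) hc (by omega) hne
        · simp only [hg', if_neg hA, if_neg hB]
          exact h.colstrict' i' c h1 hc hcμ
  refine ⟨⟨⟨h.mono, h.zero, hssyt⟩, by omega, by omega, h.le_n i d, hI.hd, ?_, ?_, ?_⟩, hxy⟩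
  · -- bumpCol g' (i+1) (g i d) ≤ d
    apply bump_le _ _ _ hI.hd
    simp only [hg', if_neg (show ¬(i + 1 = i ∧ d = d) by omega)]
    by_cases hz : g (i+1) d = 0
    · exact Or.inl hz
    · right
      have hs := (h.shape_iff (i+1) d).mp hz
      exact h.colstrict' i d hI.hi hI.hd hs.2.2
  · -- shape bound
    intro _
    simp only [Nat.add_sub_cancel]
    exact hshape_y.2.2
  · -- entries above row i+1 in columns ≤ d are < g i d
    intro i' c h1 hlt hc hcd hne
    by_cases hcase : i' = i ∧ c = d
    · obtain ⟨rfl, rfl⟩ := hcase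
      simp only [hg', if_pos (⟨rfl, rfl⟩ : i' = i' ∧ c = c)]
      exact hxy
    · simp only [hg', if_neg hcase] at hne ⊢
      rcases Nat.lt_or_ge i' i with hlt' | hge'
      · exact lt_trans (hI.habove i' c h1 hlt' hc hcd hne) hxy
      · -- i' = i, c < d (since c = d excluded)
        have hii : i' = i := by omega
        subst hii
        have hcd' : c < d := by
          rcases Nat.lt_or_ge c d with h' | h'
          · exact h'
          · exfalso; exact hcase ⟨rfl, by omega⟩
        have := bump_lt (g := g) (i := i') (x := x) (c := c) hc (by omega)
        omega

end S14
namespace S14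

lemma rskAux_succ (fuel : ℕ) (g : ℕ → ℕ → ℕ) (i x : ℕ) :
    rskAux (fuel+1) g i x =
      if g i (bumpCol g i x) = 0
      then (fun i' c' => if i' = i ∧ c' = bumpCol g i x then x else g i' c')
      else rskAux fuel
        (fun i' c' => if i' = i ∧ c' = bumpCol g i x then x else g i' c')
        (i+1) (g i (bumpCol g i x)) := rfl

lemma iterate_stable (T : Diagram) (a : ℕ) (ha : rho (rho^[a] T) = rho^[a] T) :
    ∀ m, a ≤ m → rho^[m] T = rho^[a] T := by
  intro m hm
  induction m with
  | zero =>
    have : a = 0 := by omega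
    rw [this]
  | succ k ih =>
    rcases Nat.lt_or_ge k a with hk | hk
    · have : a = k + 1 := by omega
      rw [this]
    · rw [Function.iterate_succ_apply', ih hk, ha]

lemma rectify_eq_of (T Z : Diagram) (k : ℕ) (h1 : rho^[k] T = Z) (h2 : rho Z = Z) :
    rectify T = Z := by
  have hfix : rho (rho^[k] T) = rho^[k] T := by rw [h1]; exact h2
  have hex : ∃ m, rho^[m+1] T = rho^[m] T :=
    ⟨k, by rw [Function.iterate_succ_apply']; exact hfix⟩
  unfold rectify
  rw [dif_pos hex]
  have hspec : rho^[hex.choose + 1] T = rho^[hex.choose] T := hex.choose_spec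
  have hfix0 : rho (rho^[hex.choose] T) = rho^[hex.choose] T := by
    rw [Function.iterate_succ_apply'] at hspec; exact hspec
  have e1 : rho^[max hex.choose k] T = rho^[hex.choose] T :=
    iterate_stable T hex.choose hfix0 _ (le_max_left _ _)
  have e2 : rho^[max hex.choose k] T = rho^[k] T :=
    iterate_stable T k hfix _ (le_max_right _ _)
  rw [← h1, ← e2, e1]

lemma master (n : ℕ) : ∀ (M : ℕ) (μ : ℕ → ℕ) (g : ℕ → ℕ → ℕ) (i x d fuel : ℕ),
    Ins n μ g i x d → d + (n - x) ≤ M → n - x < fuel →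
    (∃ k, rho^[k] (stT n g x d) = toDiagram n (rskAux fuel g i x)) ∧
      rho (toDiagram n (rskAux fuel g i x)) = toDiagram n (rskAux fuel g i x) := by
  intro M
  induction M with
  | zero =>
    intro μ g i x d fuel hI hM hf
    exact absurd hM (by have := hI.hd; omega)
  | succ M ih =>
    intro μ g i x d fuel hI hM hfuel
    obtain ⟨fuel, rfl⟩ : ∃ f', fuel = f' + 1 := ⟨fuel - 1, by omega⟩
    rcases lt_or_eq_of_le hI.hbd with hlt | hbeq
    · -- moving case
      have hrho := rho_move hI hlt
      have hb1 := (bump_mem hI.toCtx i x).1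
      have hI' : Ins n μ g i x (d-1) :=
        ⟨hI.toCtx, hI.hi, hI.hx1, hI.hxn, by omega, by omega,
          fun h2 => le_trans (by omega) (hI.hshape h2),
          fun i' c h1 h2 h3 h4 h5 => hI.habove i' c h1 h2 h3 (by omega) h5⟩
      obtain ⟨⟨k, hk⟩, hfix⟩ := ih μ g i x (d-1) (fuel+1) hI' (by omega) hfuel
      exact ⟨⟨k+1, by rw [Function.iterate_succ_apply, hrho]; exact hk⟩, hfix⟩
    · by_cases hy : g i d = 0
      · -- stopping case
        have hupd := stT_update hI hy
        have hfixT : rho (stT n g x d) = stT n g x d := rho_stop hI hbeq hy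
        have hr : rskAux (fuel+1) g i x
            = fun i' c' => if i' = i ∧ c' = d then x else g i' c' := by
          rw [rskAux_succ, hbeq, if_pos hy]
        rw [hr, ← hupd]
        exact ⟨⟨0, rfl⟩, hfixT⟩
      · -- bumping case
        obtain ⟨hI', hxy⟩ := ins_bump hI hbeq hy
        have hbump := stT_bump hI hy
        have hyn := hI.toCtx.le_n i d
        have hxn := hI.hxn
        have hr : rskAux (fuel+1) g i x
            = rskAux fuel (fun i' c' => if i' = i ∧ c' = d then x else g i' c')
                (i+1) (g i d) := by
          rw [rskAux_succ, hbeq, if_neg hy]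
        rw [hr, hbump]
        exact ih μ _ (i+1) (g i d) d fuel hI' (by omega) (by omega)

end S14

/-- RSK insertion corresponds to rectification of diagrams. -/
theorem statement14 (n : ℕ) (lam : ℕ → ℕ)
    (hlam1 : ∀ i, 1 ≤ i → lam (i + 1) ≤ lam i) (hlam2 : ∀ i, n < i → lam i = 0)
    (f : ℕ → ℕ → ℕ) (hf : IsSSYT n lam f) (j : ℕ) (hj1 : 1 ≤ j) (hjn : j ≤ n) :
    toDiagram n (RSKinsert n f j) =
      rectify (insert (lam 1 + 1, n + 1 - j) (toDiagram n f)) := by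
  have hctx : S14.Ctx n lam f := ⟨hlam1, hlam2, hf⟩
  have hbd : bumpCol f 1 j ≤ lam 1 + 1 := by
    apply S14.bump_le
    · omega
    · left
      by_contra hne
      have := (hctx.shape_iff 1 (lam 1 + 1)).mp hne
      omega
  have hI : S14.Ins n lam f 1 j (lam 1 + 1) :=
    ⟨hctx, le_rfl, hj1, hjn, by omega, hbd,
      by intro h2; omega,
      by intro i' c h1 h2 h3 h4 h5; omega⟩
  obtain ⟨⟨k, hk⟩, hfix⟩ :=
    S14.master n ((lam 1 + 1) + (n - j)) lam f 1 j (lam 1 + 1) (n+1) hI le_rfl (by omega)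
  have hrect := S14.rectify_eq_of (S14.stT n f j (lam 1 + 1)) _ k hk hfix
  have hins : insert ((lam 1 + 1, n + 1 - j) : ℕ × ℕ) (toDiagram n f)
      = S14.stT n f j (lam 1 + 1) := rfl
  rw [hins, hrect]
  rfl
end
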